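/- arXiv:1107.4847 — 10 statements merged into one kernel-verified Lean document; each statement's English description precedes it below -/
import Mathlib

section
/- Let Γ be a weighted directed graph on a finite nonempty vertex set V. Every eigenvalue λ of the normalized Laplace operator Δ satisfies: either λ = 0, or |1 − λ| ≤ r_2 := max_{i∈V_R} (Σ_{j∈V_R} |w_{ij}|)/|d_i^in| (with r_2 = 0 if V_R = ∅); in particular |1 − λ| ≤ r for every nonzero eigenvalue λ, so spec(Δ) ⊆ 𝒟(1,r_2) ∪ {0} ⊆ 𝒟(1,r) ∪ {0}, where 𝒟(c,ρ) is the closed disk in ℂ of center c and radius ρ. -/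
/-- In-degree of vertex `i`: `d_i^in = ∑_j w_{ij}`. -/
noncomputable def din {V : Type*} [Fintype V] (w : V → V → ℝ) (i : V) : ℝ :=
  ∑ j, w i j

/-- The normalized Laplace operator of a weighted directed graph, as a complex matrix. -/
noncomputable def lap {V : Type*} [Fintype V] [DecidableEq V] (w : V → V → ℝ) :
    Matrix V V ℂ :=
  Matrix.of fun i j =>
    if din w i = 0 then 0
    else (if i = j then 1 else 0) - ((w i j / din w i : ℝ) : ℂ)

/-- Eigenvalues of the normalized Laplacian, with algebraic multiplicity. -/
noncomputable def specL {V : Type*} [Fintype V] [DecidableEq V] (w : V → V → ℝ) :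
    Multiset ℂ :=
  (lap w).charpoly.roots

/-- `r(i) = (∑_j |w_{ij}|)/|d_i^in|` if `d_i^in ≠ 0`, and `r(i) = 0` otherwise. -/
noncomputable def rfun {V : Type*} [Fintype V] (w : V → V → ℝ) (i : V) : ℝ :=
  if din w i = 0 then 0 else (∑ j, |w i j|) / |din w i|

/-- `r = max_{i ∈ V} r(i)`. -/
noncomputable def rmax {V : Type*} [Fintype V] [Nonempty V] (w : V → V → ℝ) : ℝ :=
  Finset.univ.sup' Finset.univ_nonempty (rfun w)

/-- `r_2 = max_{i ∈ V_R} (∑_{j ∈ V_R} |w_{ij}|)/|d_i^in|` (and `r_2 = 0` for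
quasi-isolated vertices / if `V_R = ∅`). -/
noncomputable def rtwo {V : Type*} [Fintype V] [Nonempty V] (w : V → V → ℝ) : ℝ :=
  Finset.univ.sup' Finset.univ_nonempty fun i =>
    if din w i = 0 then 0
    else (∑ j ∈ Finset.univ.filter fun j => din w j ≠ 0, |w i j|) / |din w i|

lemma eval_charpoly_aux {n : Type*} [Fintype n] [DecidableEq n] (M : Matrix n n ℂ) (t : ℂ) :
    (M.charpoly).eval t = ((Matrix.diagonal fun _ => t) - M).det := by
  rw [Matrix.charpoly, ← Polynomial.coe_evalRingHom, RingHom.map_det]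
  congr 1
  ext i j
  by_cases h : i = j
  · subst h; simp [Matrix.charmatrix_apply_eq]
  · simp [Matrix.charmatrix_apply_ne _ _ _ h, Matrix.diagonal_apply_ne _ h]

lemma rtwo_le_rmax {V : Type*} [Fintype V] [Nonempty V] (w : V → V → ℝ) :
    rtwo w ≤ rmax w := by
  apply Finset.sup'_le
  intro i _
  refine le_trans ?_ (Finset.le_sup' (rfun w) (Finset.mem_univ i))
  unfold rfun
  by_cases h : din w i = 0
  · simp [h]
  · simp only [h, if_false]
    exact div_le_div_of_nonneg_right (Finset.sum_le_sum_of_subset_of_nonneg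
      (Finset.filter_subset _ _) fun j _ _ => abs_nonneg _) (abs_nonneg _)

/-- every eigenvalue `λ` of the normalized Laplacian satisfies `λ = 0` or
`|1 - λ| ≤ r_2 ≤ r`, i.e. `spec(Δ) ⊆ 𝒟(1, r_2) ∪ {0} ⊆ 𝒟(1, r) ∪ {0}`. -/
theorem spec_subset_disk {V : Type*} [Fintype V] [DecidableEq V] [Nonempty V]
    (w : V → V → ℝ) (hloop : ∀ i, w i i = 0) :
    ∀ lam ∈ specL w, lam = 0 ∨
      (‖1 - lam‖ ≤ rtwo w ∧ ‖1 - lam‖ ≤ rmax w) := by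
  intro lam hlam
  by_cases h0 : lam = 0
  · exact Or.inl h0
  right
  have hroot : ((lap w).charpoly).eval lam = 0 :=
    (Polynomial.mem_roots ((lap w).charpoly_monic.ne_zero)).1 hlam
  rw [eval_charpoly_aux] at hroot
  obtain ⟨v, hv, hmv⟩ := Matrix.exists_mulVec_eq_zero_iff.2 hroot
  have heig : ∀ i, ∑ j, lap w i j * v j = lam * v i := by
    intro i
    have h := congrFun hmv i
    simp only [Matrix.mulVec, dotProduct, Matrix.sub_apply, Matrix.diagonal_apply,
      sub_mul, Finset.sum_sub_distrib, ite_mul, zero_mul, Finset.sum_ite_eq,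
      Finset.mem_univ, if_true, Pi.zero_apply] at h
    linear_combination -h
  -- vertices with zero in-degree carry v = 0
  have hvz : ∀ j, din w j = 0 → v j = 0 := by
    intro j hj
    have h := heig j
    have : ∀ k, lap w j k * v k = 0 := by
      intro k; simp [lap, hj]
    rw [Finset.sum_congr rfl fun k _ => this k, Finset.sum_const_zero] at h
    exact (mul_eq_zero.1 h.symm).resolve_left h0
  -- choose maximizing vertex
  obtain ⟨i, -, hi⟩ := Finset.exists_max_image Finset.univ (fun j => ‖v j‖)
    Finset.univ_nonempty
  have hmax : ∀ j, ‖v j‖ ≤ ‖v i‖ := fun j => hi j (Finset.mem_univ j)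
  have hvi : 0 < ‖v i‖ := by
    obtain ⟨k, hk⟩ := Function.ne_iff.1 hv
    calc (0:ℝ) < ‖v k‖ := by simpa using hk
    _ ≤ ‖v i‖ := hmax k
  have hdi : din w i ≠ 0 := by
    intro hd
    have := hvz i hd
    rw [this] at hvi
    simp at hvi
  -- row equation at i
  have h1 : (1 - lam) * v i = ∑ j, ((w i j / din w i : ℝ) : ℂ) * v j := by
    have h := heig i
    have hrow : ∀ j, lap w i j = (if i = j then 1 else 0) - ((w i j / din w i : ℝ) : ℂ) := by
      intro j; simp [lap, hdi]
    rw [Finset.sum_congr rfl fun j _ => by rw [hrow j]] at h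
    simp only [sub_mul, Finset.sum_sub_distrib, ite_mul, one_mul, zero_mul,
      Finset.sum_ite_eq, Finset.mem_univ, if_true] at h
    linear_combination h
  have key : ‖1 - lam‖ * ‖v i‖ ≤
      ((∑ j ∈ Finset.univ.filter fun j => din w j ≠ 0, |w i j|) / |din w i|) *
        ‖v i‖ := by
    calc ‖1 - lam‖ * ‖v i‖
        = ‖∑ j, ((w i j / din w i : ℝ) : ℂ) * v j‖ := by
          rw [← norm_mul, h1]
      _ = ‖∑ j ∈ Finset.univ.filter fun j => din w j ≠ 0,
            ((w i j / din w i : ℝ) : ℂ) * v j‖ := by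
          congr 1
          refine (Finset.sum_filter_of_ne fun j _ hne => ?_).symm
          intro hj
          rw [hvz j hj, mul_zero] at hne
          exact hne rfl
      _ ≤ ∑ j ∈ Finset.univ.filter fun j => din w j ≠ 0,
            ‖((w i j / din w i : ℝ) : ℂ) * v j‖ := by
          exact norm_sum_le _ _
      _ ≤ ∑ j ∈ Finset.univ.filter fun j => din w j ≠ 0,
            (|w i j| / |din w i|) * ‖v i‖ := by
          refine Finset.sum_le_sum fun j _ => ?_
          rw [norm_mul, Complex.norm_real, Real.norm_eq_abs, abs_div]
          exact mul_le_mul_of_nonneg_left (hmax j) (by positivity)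
      _ = ((∑ j ∈ Finset.univ.filter fun j => din w j ≠ 0, |w i j|) / |din w i|) *
            ‖v i‖ := by
          rw [← Finset.sum_mul, Finset.sum_div]
  have hle : ‖1 - lam‖ ≤
      (∑ j ∈ Finset.univ.filter fun j => din w j ≠ 0, |w i j|) / |din w i| :=
    le_of_mul_le_mul_right key hvi
  have h2 : ‖1 - lam‖ ≤ rtwo w := by
    refine hle.trans ?_
    refine le_trans (le_of_eq ?_) (Finset.le_sup' _ (Finset.mem_univ i))
    simp [hdi]
  exact ⟨h2, h2.trans (rtwo_le_rmax w)⟩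
end

section
/- Let Γ be a weighted directed graph on a finite vertex set V and let Γ' be the induced subgraph on a nonempty subset V' ⊆ V with the restricted weight function. If either (i) Γ' is quasi-isolated and V' is a union of strongly connected components of Γ, or (ii) Γ' is isolated, then every eigenvalue of Δ(Γ') is an eigenvalue of Δ(Γ): spec(Δ(Γ')) ⊆ spec(Δ(Γ)) as sets. -/
/-- Vertex `j` reaches vertex `i` along directed edges. -/
def reaches {V : Type*} (w : V → V → ℝ) (j i : V) : Prop :=
  Relation.ReflTransGen (fun a b => w b a ≠ 0) j i

/-- Mutual reachability setoid (strongly connected components). -/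
def sccSetoid {V : Type*} (w : V → V → ℝ) : Setoid V where
  r a b := reaches w a b ∧ reaches w b a
  iseqv := ⟨fun _ => ⟨Relation.ReflTransGen.refl, Relation.ReflTransGen.refl⟩,
    fun h => ⟨h.2, h.1⟩,
    fun h1 h2 => ⟨h1.1.trans h2.1, h2.2.trans h1.2⟩⟩

/-- Partial order on SCCs by reverse reachability. -/
noncomputable def sccPO {V : Type*} (w : V → V → ℝ) :
    PartialOrder (Quotient (sccSetoid w)) where
  le q₁ q₂ := Quotient.liftOn₂ q₁ q₂ (fun a b => reaches w b a)
    (fun a b a' b' ha hb => propext ⟨fun h => (hb.2.trans h).trans ha.1,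
                                     fun h => (hb.1.trans h).trans ha.2⟩)
  le_refl q := Quotient.inductionOn q fun _ => Relation.ReflTransGen.refl
  le_trans q₁ q₂ q₃ := Quotient.inductionOn₃ q₁ q₂ q₃ fun _ _ _ h₁ h₂ => Relation.ReflTransGen.trans h₂ h₁
  le_antisymm q₁ q₂ := Quotient.inductionOn₂ q₁ q₂ fun _ _ h₁ h₂ => Quotient.sound ⟨h₂, h₁⟩

lemma key_dvd {V : Type*} [Fintype V] [DecidableEq V]
    (w : V → V → ℝ) (V' : Finset V)
    (hA : ∀ i ∈ V', ∑ j ∈ V'ᶜ, w i j = 0)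
    (hC : ∀ i ∈ V', ∀ j, reaches w i j ∧ reaches w j i → j ∈ V') :
    (lap (fun i j : {x // x ∈ V'} => w i j)).charpoly ∣ (lap w).charpoly := by
  classical
  letI := sccPO w
  set w' : {x // x ∈ V'} → {x // x ∈ V'} → ℝ := fun i j => w i j with hw'def
  let b : V → LinearExtension (Quotient (sccSetoid w)) :=
    fun v => toLinearExtension (Quotient.mk (sccSetoid w) v)
  have hmono : ∀ i j : V, w i j ≠ 0 → b i ≤ b j := fun i j h =>
    toLinearExtension.monotone
      (show Quotient.mk (sccSetoid w) i ≤ Quotient.mk (sccSetoid w) j from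
        Relation.ReflTransGen.single h)
  -- din agrees on V'
  have hdin : ∀ i : {x // x ∈ V'}, din w' i = din w i.1 := by
    intro i
    unfold din
    rw [← Finset.sum_add_sum_compl V' (w i.1), hA i.1 i.2, add_zero]
    exact Finset.sum_coe_sort V' (w i.1)
  -- entries agree on V'
  have hentry : ∀ i j : {x // x ∈ V'}, lap w' i j = lap w i.1 j.1 := by
    intro i j
    have hite : (if i = j then (1 : ℂ) else 0) = if i.1 = j.1 then 1 else 0 := by
      by_cases h : i = j
      · rw [if_pos h, if_pos (congrArg Subtype.val h)]
      · rw [if_neg h, if_neg fun hc => h (Subtype.ext hc)]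
    simp only [lap, Matrix.of_apply, hdin, hite]
    rfl
  -- block triangularity
  have hBT : (lap w).BlockTriangular b := by
    intro i j hlt
    have hij : i ≠ j := by rintro rfl; exact lt_irrefl _ hlt
    have hw : w i j = 0 := by
      by_contra hw
      exact absurd (hmono i j hw) (not_le.mpr hlt)
    simp [lap, hw, hij]
  have hBT' : (lap w').BlockTriangular (fun x : {x // x ∈ V'} => b x.1) := by
    intro i j hlt
    have hij : i ≠ j := by rintro rfl; exact lt_irrefl _ hlt
    have hw : w' i j = 0 := by
      by_contra hw
      exact absurd (hmono i.1 j.1 hw) (not_le.mpr hlt)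
    simp [lap, hw, hij]
  -- fibers of b meeting V' are contained in V'
  have hfib : ∀ x₀ : V, x₀ ∈ V' → ∀ i : V, b i = b x₀ → i ∈ V' := by
    intro x₀ hx₀ i hbi
    have hq : Quotient.mk (sccSetoid w) i = Quotient.mk (sccSetoid w) x₀ := hbi
    have hr := Quotient.exact hq
    exact hC x₀ hx₀ i ⟨hr.2, hr.1⟩
  -- the blocks over V' agree
  have hblock : ∀ a ∈ Finset.image (fun x : {x // x ∈ V'} => b x.1) Finset.univ,
      ((lap w').toSquareBlock (fun x : {x // x ∈ V'} => b x.1) a).charpoly =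
        ((lap w).toSquareBlock b a).charpoly := by
    intro a ha
    obtain ⟨x₀, -, hx₀⟩ := Finset.mem_image.mp ha
    have hsub : ∀ i : V, b i = a → i ∈ V' := fun i hi =>
      hfib x₀.1 x₀.2 i (hi.trans hx₀.symm)
    let e : {i : {x // x ∈ V'} // b i.1 = a} ≃ {i : V // b i = a} :=
      { toFun := fun i => ⟨i.1.1, i.2⟩
        invFun := fun i => ⟨⟨i.1, hsub i.1 i.2⟩, i.2⟩
        left_inv := fun i => rfl
        right_inv := fun i => rfl }
    have heq : (lap w).toSquareBlock b a =
        Matrix.reindex e e ((lap w').toSquareBlock (fun x : {x // x ∈ V'} => b x.1) a) := by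
      ext i j
      simp only [Matrix.reindex_apply, Matrix.submatrix_apply, Matrix.toSquareBlock_def,
        Matrix.of_apply]
      exact (hentry (e.symm i) (e.symm j)).symm
    rw [heq, Matrix.charpoly_reindex]
  -- assemble
  have himg : Finset.image (fun x : {x // x ∈ V'} => b x.1) Finset.univ ⊆
      Finset.image b Finset.univ := by
    intro a ha
    obtain ⟨x, -, hx⟩ := Finset.mem_image.mp ha
    exact Finset.mem_image.mpr ⟨x.1, Finset.mem_univ _, hx⟩
  rw [hBT.charpoly, hBT'.charpoly]
  calc (∏ a ∈ Finset.image (fun x : {x // x ∈ V'} => b x.1) Finset.univ,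
        ((lap w').toSquareBlock (fun x : {x // x ∈ V'} => b x.1) a).charpoly)
      = ∏ a ∈ Finset.image (fun x : {x // x ∈ V'} => b x.1) Finset.univ,
        ((lap w).toSquareBlock b a).charpoly := Finset.prod_congr rfl hblock
    _ ∣ ∏ a ∈ Finset.image b Finset.univ, ((lap w).toSquareBlock b a).charpoly :=
        Finset.prod_dvd_prod_of_subset _ _ _ himg

/-- let `Γ'` be the induced subgraph on a nonempty `V' ⊆ V`.  If either
(i) `Γ'` is quasi-isolated (`∑_{j ∉ V'} w_{ij} = 0` for all `i ∈ V'`) and `V'` is a union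
of strongly connected components of `Γ` (closed under mutual reachability), or
(ii) `Γ'` is isolated (`w_{ij} = 0` for `i ∈ V'`, `j ∉ V'`),
then every eigenvalue of `Δ(Γ')` is an eigenvalue of `Δ(Γ)`. -/
theorem spec_induced_subgraph_subset {V : Type*} [Fintype V] [DecidableEq V]
    (w : V → V → ℝ) (hloop : ∀ i, w i i = 0)
    (V' : Finset V) (hne : V'.Nonempty)
    (h : ((∀ i ∈ V', ∑ j ∈ V'ᶜ, w i j = 0) ∧
            (∀ i ∈ V', ∀ j, reaches w i j ∧ reaches w j i → j ∈ V')) ∨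
          (∀ i ∈ V', ∀ j ∉ V', w i j = 0)) :
    ∀ lam : ℂ, lam ∈ specL (fun i j : {x // x ∈ V'} => w i j) → lam ∈ specL w := by
  have hA : ∀ i ∈ V', ∑ j ∈ V'ᶜ, w i j = 0 := by
    rcases h with ⟨hA, -⟩ | hiso
    · exact hA
    · exact fun i hi => Finset.sum_eq_zero fun j hj => hiso i hi j (Finset.mem_compl.mp hj)
  have hC : ∀ i ∈ V', ∀ j, reaches w i j ∧ reaches w j i → j ∈ V' := by
    rcases h with ⟨-, hC⟩ | hiso
    · exact hC
    · intro i hi j hj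
      have hji := hj.2
      clear hj
      induction hji using Relation.ReflTransGen.head_induction_on with
      | refl => exact hi
      | head h' _ ih =>
        by_contra ha
        exact h' (hiso _ ih _ ha)
  intro lam hlam
  have hdvd := key_dvd w V' hA hC
  exact Multiset.mem_of_le
    (Polynomial.roots.le_of_dvd (Matrix.charpoly_monic _).ne_zero hdvd) hlam
end

section
/- Let Γ be a weighted directed graph on a finite vertex set V with nonnegative weights (w_{ij} ≥ 0 for all i,j), and let Γ_i be a strongly connected component of Γ with vertex set V_i. Let Δ_i = Δ_Ω with Ω = V_i be the Dirichlet Laplace operator on V_i. Then 0 is an eigenvalue of Δ_i if and only if Γ_i is isolated; and in that case 0 is a simple eigenvalue of Δ_i (algebraic multiplicity 1). -/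
/-- The Dirichlet Laplace operator `Δ_Ω` on `Ω = S`:
`(Δ_Ω v)(i) = v(i) - (1/d_i^in) ∑_{j ∈ Ω} w_{ij} v(j)` if `d_i^in ≠ 0` (in-degree in `Γ`),
and `0` otherwise, as a complex matrix indexed by `S`. -/
noncomputable def dlap {V : Type*} [Fintype V] [DecidableEq V] (w : V → V → ℝ)
    (S : Finset V) : Matrix {x // x ∈ S} {x // x ∈ S} ℂ :=
  Matrix.of fun i j =>
    if din w i.1 = 0 then 0
    else (if i = j then 1 else 0) - ((w i.1 j.1 / din w i.1 : ℝ) : ℂ)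

/-- `S` is a strongly connected component of `Γ` (an equivalence class of mutual
reachability). -/
def IsSCC {V : Type*} (w : V → V → ℝ) (S : Finset V) : Prop :=
  S.Nonempty ∧ ∀ i ∈ S, ∀ j, j ∈ S ↔ (reaches w i j ∧ reaches w j i)

section Aux
set_option linter.unusedSectionVars false
variable {V : Type*} [Fintype V] [DecidableEq V]

lemma scc_closure (w : V → V → ℝ) {S : Finset V} (hS : IsSCC w S) (Q : V → Prop)
    {i0 : V} (hi0 : i0 ∈ S) (hQ0 : Q i0)
    (hcl : ∀ i ∈ S, Q i → ∀ j ∈ S, w i j ≠ 0 → Q j) :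
    ∀ j ∈ S, Q j := by
  suffices h : ∀ a, Relation.ReflTransGen (fun x y => w y x ≠ 0) a i0 → a ∈ S → Q a by
    intro j hj; exact h j ((hS.2 i0 hi0 j).mp hj).2 hj
  intro a hab
  induction hab using Relation.ReflTransGen.head_induction_on with
  | refl => exact fun _ => hQ0
  | head hstep htail ih =>
    rename_i x c
    intro hx
    have hc : c ∈ S := by
      rw [hS.2 x hx c]
      exact ⟨Relation.ReflTransGen.single hstep,
        htail.trans ((hS.2 i0 hi0 x).mp hx).1⟩
    exact hcl c hc (ih hc) x hx hstep

lemma din_zero_forall (w : V → V → ℝ) (hpos : ∀ i j, 0 ≤ w i j) {i : V}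
    (h : din w i = 0) : ∀ j, w i j = 0 := by
  intro j
  exact (Finset.sum_eq_zero_iff_of_nonneg (fun k _ => hpos i k)).mp h j (Finset.mem_univ j)

lemma singleton_of_din_zero (w : V → V → ℝ) {S : Finset V} (hS : IsSCC w S)
    (hpos : ∀ i j, 0 ≤ w i j) {i0 : V} (hi0 : i0 ∈ S) (h0 : din w i0 = 0) :
    ∀ j ∈ S, j = i0 := by
  intro j hj
  rcases Relation.ReflTransGen.cases_tail ((hS.2 i0 hi0 j).mp hj).2 with h | ⟨c, _, hc⟩
  · exact h.symm
  · exact absurd (din_zero_forall w hpos h0 c) hc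

lemma din_nonneg (w : V → V → ℝ) (hpos : ∀ i j, 0 ≤ w i j) (i : V) : 0 ≤ din w i :=
  Finset.sum_nonneg fun j _ => hpos i j

lemma sum_coe_le_din (w : V → V → ℝ) (hpos : ∀ i j, 0 ≤ w i j) (S : Finset V) (i : V) :
    ∑ j : {x // x ∈ S}, w i j.1 ≤ din w i := by
  rw [Finset.sum_coe_sort S (fun j => w i j)]
  exact Finset.sum_le_sum_of_subset_of_nonneg (Finset.subset_univ S)
    (fun j _ _ => hpos i j)

lemma isolated_of_full (w : V → V → ℝ) (hpos : ∀ i j, 0 ≤ w i j) (S : Finset V) (i : V)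
    (h : ∑ j : {x // x ∈ S}, w i j.1 = din w i) : ∀ j ∉ S, w i j = 0 := by
  rw [Finset.sum_coe_sort S (fun j => w i j)] at h
  have hsd : ∑ j ∈ Finset.univ \ S, w i j = 0 := by
    have := Finset.sum_sdiff (f := w i) (Finset.subset_univ S)
    rw [h] at this
    have h2 : din w i = ∑ j, w i j := rfl
    linarith [this, h2]
  intro j hj
  exact (Finset.sum_eq_zero_iff_of_nonneg (fun k _ => hpos i k)).mp hsd j
    (Finset.mem_sdiff.mpr ⟨Finset.mem_univ j, hj⟩)

lemma full_of_isolated (w : V → V → ℝ) (S : Finset V) (i : V)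
    (h : ∀ j ∉ S, w i j = 0) : ∑ j : {x // x ∈ S}, w i j.1 = din w i := by
  rw [Finset.sum_coe_sort S (fun j => w i j)]
  exact Finset.sum_subset (Finset.subset_univ S) (fun j _ hj => h j hj)

lemma argmax_row (w : V → V → ℝ) (hpos : ∀ i j, 0 ≤ w i j) (S : Finset V) {i : V}
    (hdi : din w i ≠ 0) (f : {x // x ∈ S} → ℝ) (M : ℝ) (hMpos : 0 < M)
    (hM : ∀ j, f j ≤ M)
    (hble : M ≤ ∑ j : {x // x ∈ S}, w i j.1 / din w i * f j) :
    (∀ j ∉ S, w i j = 0) ∧ ∀ j : {x // x ∈ S}, w i j.1 ≠ 0 → f j = M := by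
  have hd0 : 0 < din w i := lt_of_le_of_ne (din_nonneg w hpos i) (Ne.symm hdi)
  set s : ℝ := ∑ j : {x // x ∈ S}, w i j.1 / din w i with hs
  have hterm : ∀ j : {x // x ∈ S}, w i j.1 / din w i * f j ≤ w i j.1 / din w i * M :=
    fun j => mul_le_mul_of_nonneg_left (hM j) (div_nonneg (hpos i j.1) hd0.le)
  have h1 : ∑ j : {x // x ∈ S}, w i j.1 / din w i * f j ≤ s * M := by
    rw [hs, Finset.sum_mul]
    exact Finset.sum_le_sum fun j _ => hterm j
  have hs1 : s ≤ 1 := by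
    rw [hs, ← Finset.sum_div, div_le_one hd0]
    exact sum_coe_le_din w hpos S i
  have hsM : s * M ≤ M := by nlinarith
  have hssum : s * M = M := le_antisymm hsM (hble.trans h1)
  have hs_eq : s = 1 := mul_right_cancel₀ hMpos.ne' (hssum.trans (one_mul M).symm)
  have hfull : ∑ j : {x // x ∈ S}, w i j.1 = din w i := by
    have h4 : s * din w i = din w i := by rw [hs_eq, one_mul]
    rw [hs, ← Finset.sum_div, div_mul_cancel₀ _ hdi] at h4
    exact h4
  refine ⟨isolated_of_full w hpos S i hfull, ?_⟩
  have hsumeq : ∑ j : {x // x ∈ S}, w i j.1 / din w i * f j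
      = ∑ j : {x // x ∈ S}, w i j.1 / din w i * M := by
    have h2 : ∑ j : {x // x ∈ S}, w i j.1 / din w i * M = s * M := by
      rw [hs, Finset.sum_mul]
    have h3 : ∑ j : {x // x ∈ S}, w i j.1 / din w i * f j = M :=
      le_antisymm (h1.trans hsM) hble
    rw [h3, h2, hssum]
  have hkey := (Finset.sum_eq_sum_iff_of_le (fun j _ => hterm j)).mp hsumeq
  intro j hj
  exact mul_left_cancel₀ (div_ne_zero hj hdi) (hkey j (Finset.mem_univ j))

lemma stoch_row (w : V → V → ℝ) (hpos : ∀ i j, 0 ≤ w i j) (S : Finset V) {i : V}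
    (hdi : din w i ≠ 0) (hfull : ∑ j : {x // x ∈ S}, w i j.1 = din w i)
    (f : {x // x ∈ S} → ℝ) (M : ℝ) (hM : ∀ j, f j ≤ M)
    (heq : M = ∑ j : {x // x ∈ S}, w i j.1 / din w i * f j) :
    ∀ j : {x // x ∈ S}, w i j.1 ≠ 0 → f j = M := by
  have hd0 : 0 < din w i := lt_of_le_of_ne (din_nonneg w hpos i) (Ne.symm hdi)
  have hterm : ∀ j : {x // x ∈ S}, w i j.1 / din w i * f j ≤ w i j.1 / din w i * M :=
    fun j => mul_le_mul_of_nonneg_left (hM j) (div_nonneg (hpos i j.1) hd0.le)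
  have h2 : ∑ j : {x // x ∈ S}, w i j.1 / din w i * M = M := by
    rw [← Finset.sum_mul, ← Finset.sum_div, hfull, div_self hdi, one_mul]
  have hsumeq : ∑ j : {x // x ∈ S}, w i j.1 / din w i * f j
      = ∑ j : {x // x ∈ S}, w i j.1 / din w i * M := by rw [h2, ← heq]
  have hkey := (Finset.sum_eq_sum_iff_of_le (fun j _ => hterm j)).mp hsumeq
  intro j hj
  exact mul_left_cancel₀ (div_ne_zero hj hdi) (hkey j (Finset.mem_univ j))

lemma dlap_row (w : V → V → ℝ) (S : Finset V) (v : {x // x ∈ S} → ℂ)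
    (h : (dlap w S).mulVec v = 0) (i : {x // x ∈ S}) (hdi : din w i.1 ≠ 0) :
    v i = ∑ j : {x // x ∈ S}, ((w i.1 j.1 / din w i.1 : ℝ) : ℂ) * v j := by
  have h0 := congrFun h i
  simp only [Matrix.mulVec, dotProduct, dlap, Matrix.of_apply, if_neg hdi,
    Pi.zero_apply, sub_mul, ite_mul, one_mul, zero_mul] at h0
  rw [Finset.sum_sub_distrib, Finset.sum_ite_eq] at h0
  simp only [Finset.mem_univ, if_true] at h0
  exact sub_eq_zero.mp h0

lemma full_sum_ofReal (w : V → V → ℝ) (S : Finset V) (i : V) (hdi : din w i ≠ 0)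
    (hfull : ∑ j : {x // x ∈ S}, w i j.1 = din w i) :
    ∑ j : {x // x ∈ S}, ((w i j.1 / din w i : ℝ) : ℂ) = 1 := by
  rw [← Complex.ofReal_sum, ← Finset.sum_div, hfull, div_self hdi, Complex.ofReal_one]

lemma dlap_mulVec_one (w : V → V → ℝ) (S : Finset V)
    (hfull : ∀ i ∈ S, ∑ j : {x // x ∈ S}, w i j.1 = din w i) :
    (dlap w S).mulVec (fun _ => (1 : ℂ)) = 0 := by
  funext i
  simp only [Matrix.mulVec, dotProduct, mul_one, Pi.zero_apply, dlap, Matrix.of_apply]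
  by_cases hdi : din w i.1 = 0
  · simp [hdi]
  · simp only [if_neg hdi]
    rw [Finset.sum_sub_distrib, Finset.sum_ite_eq]
    simp only [Finset.mem_univ, if_true]
    rw [full_sum_ofReal w S i.1 hdi (hfull i.1 i.2), sub_self]

lemma ker_isolated (w : V → V → ℝ) (hpos : ∀ i j, 0 ≤ w i j) {S : Finset V}
    (hS : IsSCC w S) (v : {x // x ∈ S} → ℂ) (hv : v ≠ 0)
    (h : (dlap w S).mulVec v = 0) :
    ∀ i ∈ S, ∀ j ∉ S, w i j = 0 := by
  by_cases hdeg : ∃ i ∈ S, din w i = 0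
  · obtain ⟨i0, hi0, h0⟩ := hdeg
    intro i hi j _
    rw [singleton_of_din_zero w hS hpos hi0 h0 i hi]
    exact din_zero_forall w hpos h0 j
  · push_neg at hdeg
    obtain ⟨x0, hx0⟩ := hS.1
    have hne : Nonempty {x // x ∈ S} := ⟨⟨x0, hx0⟩⟩
    set F : {x // x ∈ S} → ℝ := fun j => ‖v j‖ with hF
    obtain ⟨imax, -, hmax⟩ := Finset.exists_max_image Finset.univ F Finset.univ_nonempty
    set M := F imax with hMdef
    have hMb : ∀ j, F j ≤ M := fun j => hmax j (Finset.mem_univ j)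
    have hMpos : 0 < M := by
      obtain ⟨k, hk⟩ := Function.ne_iff.mp hv
      exact lt_of_lt_of_le (by simpa [hF] using (norm_pos_iff.mpr hk)) (hMb k)
    have hrow : ∀ i : {x // x ∈ S}, F i = M →
        (∀ j ∉ S, w i.1 j = 0) ∧ ∀ j : {x // x ∈ S}, w i.1 j.1 ≠ 0 → F j = M := by
      intro i hFi
      have heq := dlap_row w S v h i (hdeg i.1 i.2)
      have hble : M ≤ ∑ j : {x // x ∈ S}, w i.1 j.1 / din w i.1 * F j := by
        calc M = ‖v i‖ := hFi.symm
          _ = ‖∑ j : {x // x ∈ S}, ((w i.1 j.1 / din w i.1 : ℝ) : ℂ) * v j‖ := by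
              rw [← heq]
          _ ≤ ∑ j : {x // x ∈ S}, ‖((w i.1 j.1 / din w i.1 : ℝ) : ℂ) * v j‖ :=
              norm_sum_le _ _
          _ = ∑ j : {x // x ∈ S}, w i.1 j.1 / din w i.1 * F j := by
              refine Finset.sum_congr rfl fun j _ => ?_
              rw [norm_mul, Complex.norm_real, Real.norm_eq_abs,
                abs_of_nonneg (div_nonneg (hpos _ _) (din_nonneg w hpos _))]
      exact argmax_row w hpos S (hdeg i.1 i.2) F M hMpos hMb hble
    have hQ : ∀ j ∈ S, ∀ hj : j ∈ S, F ⟨j, hj⟩ = M := by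
      apply scc_closure w hS (fun j => ∀ hj : j ∈ S, F ⟨j, hj⟩ = M) imax.2
      · intro hj
        rw [show (⟨imax.1, hj⟩ : {x // x ∈ S}) = imax from Subtype.ext rfl]
      · intro i hi hQi j hj hw hj'
        exact (hrow ⟨i, hi⟩ (hQi hi)).2 ⟨j, hj'⟩ hw
    intro i hi
    exact (hrow ⟨i, hi⟩ (hQ i hi hi)).1

lemma exists_ker_iff_isolated (w : V → V → ℝ) (hpos : ∀ i j, 0 ≤ w i j) {S : Finset V}
    (hS : IsSCC w S) :
    (∃ v : {x // x ∈ S} → ℂ, v ≠ 0 ∧ (dlap w S).mulVec v = 0) ↔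
      ∀ i ∈ S, ∀ j ∉ S, w i j = 0 := by
  constructor
  · rintro ⟨v, hv, h⟩
    exact ker_isolated w hpos hS v hv h
  · intro hiso
    obtain ⟨x0, hx0⟩ := hS.1
    refine ⟨fun _ => 1, ?_, dlap_mulVec_one w S (fun i hi => full_of_isolated w S i (hiso i hi))⟩
    intro hc
    exact one_ne_zero (congrFun hc ⟨x0, hx0⟩)

lemma real_inv_const (w : V → V → ℝ) (hpos : ∀ i j, 0 ≤ w i j) {S : Finset V}
    (hS : IsSCC w S) (hd : ∀ i ∈ S, din w i ≠ 0)
    (hfull : ∀ i ∈ S, ∑ j : {x // x ∈ S}, w i j.1 = din w i)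
    (u : {x // x ∈ S} → ℝ)
    (hu : ∀ i : {x // x ∈ S}, u i = ∑ j : {x // x ∈ S}, w i.1 j.1 / din w i.1 * u j) :
    ∀ i j : {x // x ∈ S}, u i = u j := by
  obtain ⟨x0, hx0⟩ := hS.1
  have hne : Nonempty {x // x ∈ S} := ⟨⟨x0, hx0⟩⟩
  obtain ⟨imax, -, hmax⟩ := Finset.exists_max_image Finset.univ u Finset.univ_nonempty
  set M := u imax with hMdef
  have hMb : ∀ j, u j ≤ M := fun j => hmax j (Finset.mem_univ j)
  have hQ : ∀ j ∈ S, ∀ hj : j ∈ S, u ⟨j, hj⟩ = M := by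
    apply scc_closure w hS (fun j => ∀ hj : j ∈ S, u ⟨j, hj⟩ = M) imax.2
    · intro hj
      rw [show (⟨imax.1, hj⟩ : {x // x ∈ S}) = imax from Subtype.ext rfl]
    · intro i hi hQi j hj hw hj'
      refine stoch_row w hpos S (hd i hi) (hfull i hi) u M hMb ?_ ⟨j, hj'⟩ hw
      rw [← hQi hi]
      exact hu ⟨i, hi⟩
  intro i j
  have h1 : u i = M := by
    rw [show i = (⟨i.1, i.2⟩ : {x // x ∈ S}) from Subtype.ext rfl]
    exact hQ i.1 i.2 i.2
  have h2 : u j = M := by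
    rw [show j = (⟨j.1, j.2⟩ : {x // x ∈ S}) from Subtype.ext rfl]
    exact hQ j.1 j.2 j.2
  rw [h1, h2]

lemma ker_const (w : V → V → ℝ) (hpos : ∀ i j, 0 ≤ w i j) {S : Finset V}
    (hS : IsSCC w S) (hiso : ∀ i ∈ S, ∀ j ∉ S, w i j = 0)
    (v : {x // x ∈ S} → ℂ) (h : (dlap w S).mulVec v = 0) :
    ∀ i j : {x // x ∈ S}, v i = v j := by
  by_cases hdeg : ∃ i ∈ S, din w i = 0
  · obtain ⟨i0, hi0, h0⟩ := hdeg
    intro i j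
    have : i = j := Subtype.ext (by
      rw [singleton_of_din_zero w hS hpos hi0 h0 i.1 i.2,
        singleton_of_din_zero w hS hpos hi0 h0 j.1 j.2])
    rw [this]
  · push_neg at hdeg
    have hfull : ∀ i ∈ S, ∑ j : {x // x ∈ S}, w i j.1 = din w i :=
      fun i hi => full_of_isolated w S i (hiso i hi)
    have hre : ∀ i : {x // x ∈ S},
        (v i).re = ∑ j : {x // x ∈ S}, w i.1 j.1 / din w i.1 * (v j).re := by
      intro i
      have h1 := congrArg Complex.re (dlap_row w S v h i (hdeg i.1 i.2))
      simpa [Complex.re_sum, Complex.re_ofReal_mul] using h1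
    have him : ∀ i : {x // x ∈ S},
        (v i).im = ∑ j : {x // x ∈ S}, w i.1 j.1 / din w i.1 * (v j).im := by
      intro i
      have h1 := congrArg Complex.im (dlap_row w S v h i (hdeg i.1 i.2))
      simpa [Complex.im_sum, Complex.im_ofReal_mul] using h1
    intro i j
    have hr := real_inv_const w hpos hS hdeg hfull (fun k => (v k).re) hre i j
    have hi := real_inv_const w hpos hS hdeg hfull (fun k => (v k).im) him i j
    exact Complex.ext hr hi

lemma ker_sq (w : V → V → ℝ) (hpos : ∀ i j, 0 ≤ w i j) {S : Finset V}
    (hS : IsSCC w S) (hiso : ∀ i ∈ S, ∀ j ∉ S, w i j = 0)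
    (v : {x // x ∈ S} → ℂ) (h : (dlap w S).mulVec ((dlap w S).mulVec v) = 0) :
    (dlap w S).mulVec v = 0 := by
  by_cases hdeg : ∃ i ∈ S, din w i = 0
  · obtain ⟨i0, hi0, h0⟩ := hdeg
    have hA : dlap w S = 0 := by
      ext i j
      have : i.1 = i0 := singleton_of_din_zero w hS hpos hi0 h0 i.1 i.2
      simp [dlap, this, h0]
    rw [hA, Matrix.zero_mulVec]
  · push_neg at hdeg
    obtain ⟨x0, hx0⟩ := hS.1
    have hne : Nonempty {x // x ∈ S} := ⟨⟨x0, hx0⟩⟩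
    have hfull : ∀ i ∈ S, ∑ j : {x // x ∈ S}, w i j.1 = din w i :=
      fun i hi => full_of_isolated w S i (hiso i hi)
    -- real version of the matrix
    set B : Matrix {x // x ∈ S} {x // x ∈ S} ℝ :=
      Matrix.of (fun i j : {x // x ∈ S} =>
        (if i = j then 1 else 0) - w i.1 j.1 / din w i.1) with hB
    have hB1 : B.mulVec (fun _ => (1 : ℝ)) = 0 := by
      funext i
      simp only [hB, Matrix.mulVec, dotProduct, Matrix.of_apply, mul_one, Pi.zero_apply]
      rw [Finset.sum_sub_distrib, Finset.sum_ite_eq]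
      simp only [Finset.mem_univ, if_true]
      rw [← Finset.sum_div, hfull i.1 i.2, div_self (hdeg i.1 i.2), sub_self]
    have hdetB : B.det = 0 := by
      rw [← Matrix.exists_mulVec_eq_zero_iff]
      refine ⟨fun _ => 1, ?_, hB1⟩
      intro hc
      exact one_ne_zero (congrFun hc ⟨x0, hx0⟩)
    have hdetBT : B.transpose.det = 0 := by rw [Matrix.det_transpose]; exact hdetB
    obtain ⟨u, hu0, huB⟩ := (Matrix.exists_mulVec_eq_zero_iff).mpr hdetBT
    have hueq : ∀ j : {x // x ∈ S},
        u j = ∑ i : {x // x ∈ S}, w i.1 j.1 / din w i.1 * u i := by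
      intro j
      have h1 := congrFun huB j
      simp only [Matrix.mulVec, dotProduct, Matrix.transpose_apply, hB,
        Matrix.of_apply, Pi.zero_apply, sub_mul, ite_mul, one_mul, zero_mul] at h1
      rw [Finset.sum_sub_distrib, Finset.sum_ite_eq'] at h1
      simp only [Finset.mem_univ, if_true] at h1
      exact sub_eq_zero.mp h1
    set p : {x // x ∈ S} → ℝ := fun i => |u i| with hp
    have hple : ∀ j, p j ≤ ∑ i : {x // x ∈ S}, w i.1 j.1 / din w i.1 * p i := by
      intro j
      calc p j = |∑ i : {x // x ∈ S}, w i.1 j.1 / din w i.1 * u i| := by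
            simp only [hp]; rw [← hueq j]
        _ ≤ ∑ i : {x // x ∈ S}, |w i.1 j.1 / din w i.1 * u i| :=
            Finset.abs_sum_le_sum_abs _ _
        _ = ∑ i : {x // x ∈ S}, w i.1 j.1 / din w i.1 * p i := by
            refine Finset.sum_congr rfl fun i _ => ?_
            rw [abs_mul, abs_of_nonneg (div_nonneg (hpos _ _)
              (din_nonneg w hpos _))]
    have htot : ∑ j : {x // x ∈ S}, ∑ i : {x // x ∈ S}, w i.1 j.1 / din w i.1 * p i
        = ∑ i : {x // x ∈ S}, p i := by
      rw [Finset.sum_comm]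
      refine Finset.sum_congr rfl fun i _ => ?_
      rw [← Finset.sum_mul, ← Finset.sum_div, hfull i.1 i.2, div_self (hdeg i.1 i.2), one_mul]
    have hpeq : ∀ j : {x // x ∈ S},
        p j = ∑ i : {x // x ∈ S}, w i.1 j.1 / din w i.1 * p i := by
      have := (Finset.sum_eq_sum_iff_of_le (fun j _ => hple j)).mp (htot.symm)
      exact fun j => this j (Finset.mem_univ j)
    have hppos : 0 < ∑ i : {x // x ∈ S}, p i := by
      obtain ⟨k, hk⟩ := Function.ne_iff.mp hu0
      refine Finset.sum_pos' (fun i _ => abs_nonneg _) ⟨k, Finset.mem_univ k, ?_⟩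
      exact abs_pos.mpr hk
    -- y is constant
    set y := (dlap w S).mulVec v with hy
    have hconst := ker_const w hpos hS hiso y h
    set a := y ⟨x0, hx0⟩ with ha
    have hya : ∀ i, y i = a := fun i => hconst i ⟨x0, hx0⟩
    have hinner : ∀ j : {x // x ∈ S},
        ∑ i : {x // x ∈ S}, (p i : ℂ) * dlap w S i j = 0 := by
      intro j
      have hsplit : ∑ i : {x // x ∈ S}, (p i : ℂ) * dlap w S i j
          = (∑ i : {x // x ∈ S}, if i = j then (p i : ℂ) else 0)
            - ∑ i : {x // x ∈ S}, ((w i.1 j.1 / din w i.1 * p i : ℝ) : ℂ) := by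
        rw [← Finset.sum_sub_distrib]
        refine Finset.sum_congr rfl fun i _ => ?_
        simp only [dlap, Matrix.of_apply, if_neg (hdeg i.1 i.2)]
        push_cast
        rcases eq_or_ne i j with rfl | hij
        · simp only [if_true]; ring
        · simp only [if_neg hij]; ring
      rw [hsplit, Finset.sum_ite_eq']
      simp only [Finset.mem_univ, if_true]
      rw [← Complex.ofReal_sum,
        show ∑ i : {x // x ∈ S}, (w i.1 j.1 / din w i.1 * p i) = p j from (hpeq j).symm]
      exact sub_self _
    have hT0 : ∑ i : {x // x ∈ S}, (p i : ℂ) * y i = 0 := by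
      have hcomm : ∑ i : {x // x ∈ S}, (p i : ℂ) * y i
          = ∑ j : {x // x ∈ S}, (∑ i : {x // x ∈ S}, (p i : ℂ) * dlap w S i j) * v j := by
        rw [hy]
        simp only [Matrix.mulVec, dotProduct, Finset.mul_sum, Finset.sum_mul, mul_assoc]
        exact Finset.sum_comm
      rw [hcomm]
      refine Finset.sum_eq_zero fun j _ => ?_
      rw [hinner j, zero_mul]
    have hTa : ∑ i : {x // x ∈ S}, (p i : ℂ) * y i
        = ((∑ i : {x // x ∈ S}, p i : ℝ) : ℂ) * a := by
      rw [Complex.ofReal_sum, Finset.sum_mul]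
      exact Finset.sum_congr rfl fun i _ => by rw [hya i]
    have ha0 : a = 0 := by
      have h5 : ((∑ i : {x // x ∈ S}, p i : ℝ) : ℂ) * a = 0 := by rw [← hTa, hT0]
      rcases mul_eq_zero.mp h5 with h6 | h6
      · exact absurd h6 (by exact_mod_cast hppos.ne')
      · exact h6
    funext i
    simp [hya i, ha0]

end Aux

/-- for a graph with nonnegative weights and a strongly connected component
`Γ_i` with vertex set `V_i`, `0` is an eigenvalue of the Dirichlet Laplacian `Δ_i` iff
`Γ_i` is isolated, and in that case `0` is a simple eigenvalue (algebraic multiplicity 1). -/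
theorem dirichlet_zero_eigenvalue_iff_isolated {V : Type*} [Fintype V] [DecidableEq V]
    (w : V → V → ℝ) (hloop : ∀ i, w i i = 0) (hpos : ∀ i j, 0 ≤ w i j)
    (S : Finset V) (hS : IsSCC w S) :
    ((0 : ℂ) ∈ (dlap w S).charpoly.roots ↔ ∀ i ∈ S, ∀ j ∉ S, w i j = 0) ∧
    ((∀ i ∈ S, ∀ j ∉ S, w i j = 0) → ((dlap w S).charpoly.roots).count 0 = 1) := by
  classical
  obtain ⟨x0, hx0⟩ := hS.1
  have hne : Nonempty {x // x ∈ S} := ⟨⟨x0, hx0⟩⟩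
  set A := dlap w S with hA
  set φ : Module.End ℂ ({x // x ∈ S} → ℂ) := Matrix.toLin' A with hφ
  have hchar : A.charpoly = LinearMap.charpoly φ := by
    rw [← LinearMap.charpoly_toMatrix φ (Pi.basisFun ℂ {x // x ∈ S}),
      LinearMap.toMatrix_eq_toMatrix', hφ, LinearMap.toMatrix'_toLin']
  have hne0 : A.charpoly ≠ 0 := A.charpoly_monic.ne_zero
  have hkeriff := exists_ker_iff_isolated w hpos hS
  constructor
  · rw [Polynomial.mem_roots hne0, Polynomial.IsRoot, ← Polynomial.coeff_zero_eq_eval_zero,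
      hchar]
    rw [show (LinearMap.charpoly φ).coeff 0
        = Polynomial.constantCoeff (LinearMap.charpoly φ) from rfl]
    rw [LinearMap.charpoly_constantCoeff_eq_zero_iff]
    constructor
    · rintro ⟨m, hm, h⟩
      exact hkeriff.mp ⟨m, hm, by rwa [hφ, Matrix.toLin'_apply] at h⟩
    · intro hiso
      obtain ⟨v, hv, h⟩ := hkeriff.mpr hiso
      exact ⟨v, hv, by rw [hφ, Matrix.toLin'_apply]; exact h⟩
  · intro hiso
    rw [Polynomial.count_roots, hchar, Polynomial.rootMultiplicity_eq_natTrailingDegree',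
      ← LinearMap.finrank_maxGenEigenspace_zero_eq]
    have hker_span : LinearMap.ker φ
        = Submodule.span ℂ {(fun _ => 1 : {x // x ∈ S} → ℂ)} := by
      apply le_antisymm
      · intro v hv
        rw [LinearMap.mem_ker, hφ, Matrix.toLin'_apply] at hv
        have hconst := ker_const w hpos hS hiso v hv
        rw [Submodule.mem_span_singleton]
        exact ⟨v ⟨x0, hx0⟩, funext fun i => by
          simpa using (hconst i ⟨x0, hx0⟩).symm⟩
      · rw [Submodule.span_le, Set.singleton_subset_iff]
        rw [SetLike.mem_coe, LinearMap.mem_ker, hφ, Matrix.toLin'_apply]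
        exact dlap_mulVec_one w S (fun i hi => full_of_isolated w S i (hiso i hi))
    have hdown : ∀ (k : ℕ) (x : {x // x ∈ S} → ℂ), (φ ^ k) x = 0 → φ x = 0 := by
      intro k
      induction k with
      | zero =>
        intro x hx
        simp only [pow_zero, Module.End.one_apply] at hx
        rw [hx]; exact map_zero φ
      | succ k ih =>
        intro x hx
        rw [pow_succ, Module.End.mul_apply] at hx
        have h2 := ih (φ x) hx
        rw [hφ, Matrix.toLin'_apply, Matrix.toLin'_apply] at h2
        rw [hφ, Matrix.toLin'_apply]
        exact ker_sq w hpos hS hiso x h2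
    have hmax : Module.End.maxGenEigenspace φ 0 = LinearMap.ker φ := by
      apply le_antisymm
      · intro x hx
        rw [Module.End.mem_maxGenEigenspace] at hx
        obtain ⟨k, hk⟩ := hx
        simp only [zero_smul, sub_zero] at hk
        exact LinearMap.mem_ker.mpr (hdown k x hk)
      · intro x hx
        rw [Module.End.mem_maxGenEigenspace]
        exact ⟨1, by simp [LinearMap.mem_ker.mp hx]⟩
    rw [hmax, hker_span]
    exact finrank_span_singleton
      (by intro hc; exact one_ne_zero (congrFun hc ⟨x0, hx0⟩))
end

section
/- Let Γ be a directed acyclic graph on a finite nonempty vertex set V, i.e., a weighted directed graph containing no directed cycle. Then every eigenvalue of the normalized Laplace operator Δ lies in {0, 1}; moreover, the algebraic multiplicity of the eigenvalue 0 equals |V∖V_R| (the number of quasi-isolated vertices) and the algebraic multiplicity of the eigenvalue 1 equals |V_R|. -/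
/-- `Γ` has a directed cycle: a sequence `v_0, v_1, …, v_m = v_0` with `m ≥ 2` and
`w_{v_{t+1} v_t} ≠ 0` for all `0 ≤ t < m`. -/
def HasDirCycle {V : Type*} (w : V → V → ℝ) : Prop :=
  ∃ (m : ℕ) (v : ℕ → V), 2 ≤ m ∧ v m = v 0 ∧ ∀ t < m, w (v (t + 1)) (v t) ≠ 0

theorem exists_path' {V : Type*} (w : V → V → ℝ) {a b : V}
    (h : Relation.TransGen (fun x y => w y x ≠ 0) a b) :
    ∃ m, 1 ≤ m ∧ ∃ v : ℕ → V, v 0 = a ∧ v m = b ∧ ∀ t < m, w (v (t + 1)) (v t) ≠ 0 := by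
  induction h with
  | @single c h =>
    refine ⟨1, le_refl _, fun t => if t = 0 then a else c, by simp, by simp, ?_⟩
    intro t ht
    interval_cases t
    simpa using h
  | @tail b c hab hbc ih =>
    obtain ⟨m, hm, v, h0, hmb, hstep⟩ := ih
    refine ⟨m + 1, by omega, fun t => if t ≤ m then v t else c, by simp [h0], by simp, ?_⟩
    intro t ht
    rcases lt_or_ge t m with h1 | h1
    · simpa [Nat.le_of_lt h1, Nat.succ_le_of_lt h1] using hstep t h1
    · have : t = m := by omega
      subst this
      simpa [hmb] using hbc

open Polynomial

/-- for a directed acyclic graph, `spec(Δ) ⊆ {0, 1}`; the algebraic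
multiplicity of the eigenvalue `0` equals the number of quasi-isolated vertices
`|V ∖ V_R|`, and the multiplicity of the eigenvalue `1` equals `|V_R|`. -/
theorem dag_spec_zero_one {V : Type*} [Fintype V] [DecidableEq V] [Nonempty V]
    (w : V → V → ℝ) (hloop : ∀ i, w i i = 0) (hac : ¬ HasDirCycle w) :
    (∀ lam ∈ specL w, lam = 0 ∨ lam = 1) ∧
    (specL w).count 0 = (Finset.univ.filter fun i => din w i = 0).card ∧
    (specL w).count 1 = (Finset.univ.filter fun i => din w i ≠ 0).card := by
  set r : V → V → Prop := fun x y => w y x ≠ 0 with hr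
  have hirr : ∀ a : V, ¬ Relation.TransGen r a a := by
    intro a ha
    obtain ⟨m, hm, v, h0, hma, hstep⟩ := exists_path' w ha
    rcases eq_or_lt_of_le hm with h1 | h1
    · have := hstep 0 (by omega)
      rw [← h1] at hma
      rw [hma, h0] at this
      exact this (hloop a)
    · exact hac ⟨m, v, h1, by rw [hma, h0], hstep⟩
  have hanti : ∀ a b : V, Relation.ReflTransGen r a b → Relation.ReflTransGen r b a → a = b := by
    intro a b hab hba
    rcases (Relation.reflTransGen_iff_eq_or_transGen.mp hab) with h | h
    · exact h.symm
    · exact absurd (h.trans_right hba) (hirr b)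
  haveI hpo : IsPartialOrder V (Relation.ReflTransGen r) :=
    { refl := fun a => Relation.ReflTransGen.refl
      trans := fun a b c => Relation.ReflTransGen.trans
      antisymm := hanti }
  obtain ⟨s, hs, hrs⟩ := @extend_partialOrder V (Relation.ReflTransGen r) hpo
  haveI := hs
  letI : LinearOrder V :=
    { le := fun a b => s b a
      le_refl := fun a => refl_of s a
      le_trans := fun a b c hab hbc => _root_.trans_of s hbc hab
      le_antisymm := fun a b hab hba => antisymm_of s hba hab
      le_total := fun a b => total_of s b a
      toDecidableLE := fun a b => Classical.propDecidable _ }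
  have htri : (lap w).BlockTriangular id := by
    intro i j hij
    have hne : i ≠ j := fun h => absurd (h ▸ hij) (lt_irrefl _)
    have hnot : ¬ s j i := (lt_iff_le_not_ge.mp hij).2
    have hwij : w i j = 0 := by
      by_contra hw
      exact hnot (hrs j i (Relation.ReflTransGen.single hw))
    simp [lap, hwij, hne]
  have hdiag : ∀ i : V, lap w i i = if din w i = 0 then 0 else 1 := by
    intro i
    by_cases h : din w i = 0 <;> simp [lap, hloop i, h]
  set c : V → ℂ := fun i => if din w i = 0 then 0 else 1 with hc
  have hcp : (lap w).charpoly = ∏ i : V, (X - C (c i)) := by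
    rw [Matrix.charpoly_of_upperTriangular _ htri]
    exact Finset.prod_congr rfl fun i _ => by rw [hdiag i]
  have hroots : specL w = Multiset.map c Finset.univ.val := by
    rw [specL, hcp,
      show (∏ i : V, (X - C (c i))) = ((Finset.univ.val.map c).map fun a => X - C a).prod by
        rw [Multiset.map_map]; rfl,
      Polynomial.roots_multiset_prod_X_sub_C]
  refine ⟨?_, ?_, ?_⟩
  · intro lam hlam
    rw [hroots] at hlam
    obtain ⟨i, _, hi⟩ := Multiset.mem_map.mp hlam
    rw [← hi, hc]
    by_cases h : din w i = 0 <;> simp [h]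
  · rw [hroots, Multiset.count_map]
    rw [show (Finset.univ.filter fun i => din w i = 0).card
        = Multiset.card (Finset.univ.val.filter fun i => din w i = 0) from rfl]
    congr 1
    apply Multiset.filter_congr
    intro i _
    by_cases h : din w i = 0 <;> simp [hc, h]
  · rw [hroots, Multiset.count_map]
    rw [show (Finset.univ.filter fun i => din w i ≠ 0).card
        = Multiset.card (Finset.univ.val.filter fun i => din w i ≠ 0) from rfl]
    congr 1
    apply Multiset.filter_congr
    intro i _
    by_cases h : din w i = 0 <;> simp [hc, h]
end

section
/- Let Γ be a weighted directed graph on a finite vertex set V. If at least k eigenvalues of the normalized Laplace operator Δ, counted with algebraic multiplicity, are not equal to 0 or 1, then Γ has at least k cyclic vertices, i.e., at least k vertices that lie on some directed cycle. -/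
/-- Vertex `i` is cyclic: it lies on a directed cycle, i.e. there is a sequence
`v_0, v_1, …, v_m = v_0` with `m ≥ 2`, `w_{v_{t+1} v_t} ≠ 0` for `t < m`, passing
through `i`. -/
def CyclicVertex {V : Type*} (w : V → V → ℝ) (i : V) : Prop :=
  ∃ (m : ℕ) (v : ℕ → V), 2 ≤ m ∧ v m = v 0 ∧ (∀ t < m, w (v (t + 1)) (v t) ≠ 0) ∧
    ∃ t ≤ m, v t = i

/-- From a `TransGen` we can extract a finite path. -/
private lemma exists_path_of_transGen {V : Type*} {E : V → V → Prop} {x y : V}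
    (h : Relation.TransGen E x y) :
    ∃ m, 1 ≤ m ∧ ∃ v : ℕ → V, v 0 = x ∧ v m = y ∧ ∀ t < m, E (v t) (v (t + 1)) := by
  induction h with
  | @single c hxy =>
      refine ⟨1, le_refl _, fun t => if t = 0 then x else c, by simp, by simp, ?_⟩
      intro t ht
      interval_cases t
      simpa using hxy
  | @tail p q hab hbc ih =>
      obtain ⟨m, hm, v, h0, hmy, hEd⟩ := ih
      refine ⟨m + 1, by omega, fun t => if t ≤ m then v t else q, by simp [h0], by simp, ?_⟩
      intro t ht
      rcases Nat.lt_or_ge t m with h' | h'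
      · simpa [Nat.le_of_lt h', Nat.succ_le_of_lt h'] using hEd t h'
      · have htm : t = m := by omega
        subst htm
        simpa [hmy] using hbc

/-- filter of a bind -/
private lemma filter_bind_aux {α β : Type*} (p : β → Prop) [DecidablePred p]
    (s : Multiset α) (f : α → Multiset β) :
    Multiset.filter p (s.bind f) = s.bind fun a => Multiset.filter p (f a) := by
  induction s using Multiset.induction with
  | empty => simp
  | cons a s ih => simp [Multiset.cons_bind, Multiset.filter_add, ih]

/-- if at least `k` eigenvalues of `Δ` (with algebraic multiplicity) are
different from `0` and `1`, then the graph has at least `k` cyclic vertices. -/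
theorem cyclic_vertices_ge_of_eigenvalues {V : Type*} [Fintype V] [DecidableEq V] [Nonempty V]
    (w : V → V → ℝ) (hloop : ∀ i, w i i = 0) (k : ℕ)
    (h : k ≤ (((specL w).filter fun lam => lam ≠ 0 ∧ lam ≠ 1)).card) :
    k ≤ {i : V | CyclicVertex w i}.ncard := by
  classical
  set E : V → V → Prop := fun i j => w j i ≠ 0 with hE
  set Cyc : V → Prop := fun i => Relation.TransGen E i i with hCycdef
  -- Step 1: `Cyc i → CyclicVertex w i`
  have hsub : {i : V | Cyc i} ⊆ {i : V | CyclicVertex w i} := by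
    intro i hi
    obtain ⟨m, hm, v, h0, hmi, hEd⟩ := exists_path_of_transGen hi
    have hm2 : 2 ≤ m := by
      by_contra hlt
      have hm1 : m = 1 := by omega
      have h1 : E (v 0) (v 1) := hEd 0 (by omega)
      rw [h0, show (1 : ℕ) = m from hm1.symm, hmi] at h1
      exact h1 (hloop i)
    exact ⟨m, v, hm2, by rw [hmi, h0], fun t ht => hEd t ht, 0, Nat.zero_le _, h0⟩
  -- reachability and the ordering function
  set Q : V → V → Prop := Relation.ReflTransGen E with hQdef
  set r : V → ℕ := fun i => {j | Q i j}.ncard with hrdef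
  set tie : V → ℕ := fun i => if Cyc i then 0 else (Fintype.equivFin V i).val + 1 with htie
  set b : V → ℕ ×ₗ ℕ := fun i => toLex (r i, tie i) with hbdef
  have hrmono : ∀ i j, Q i j → r j ≤ r i := by
    intro i j hij
    exact Set.ncard_le_ncard (fun k hk => hij.trans hk) (Set.toFinite _)
  have hrstrict : ∀ i j, Q i j → ¬ Q j i → r j < r i := by
    intro i j hij hji
    apply Set.ncard_lt_ncard ?_ (Set.toFinite _)
    constructor
    · exact fun k hk => hij.trans hk
    · intro hsub'
      exact hji (hsub' (Relation.ReflTransGen.refl))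
  have hedge : ∀ i j, E i j → b j ≤ b i := by
    intro i j hij
    by_cases hji : Q j i
    · have hcyci : Cyc i := Relation.TransGen.head' hij hji
      have hcycj : Cyc j := Relation.TransGen.tail' hji hij
      have h1 : r j ≤ r i := hrmono i j (Relation.ReflTransGen.single hij)
      have h2 : r i ≤ r j := hrmono j i hji
      have : b j = b i := by
        simp only [hbdef, htie, if_pos hcyci, if_pos hcycj, le_antisymm h1 h2]
      exact this.le
    · have hr : r j < r i := hrstrict i j (Relation.ReflTransGen.single hij) hji
      exact le_of_lt (Prod.Lex.lt_iff.2 (Or.inl hr))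
  -- the Laplacian is block triangular w.r.t. `b`
  have hBT : (lap w).BlockTriangular b := by
    intro i j hlt
    have hne : i ≠ j := by rintro rfl; exact lt_irrefl _ hlt
    by_cases hw : w i j = 0
    · simp [lap, hne, hw]
    · exact absurd (hedge j i hw) (not_le.2 hlt)
  -- charpoly factorization
  have hchar := hBT.charpoly
  have hne0 : ∀ a ∈ Finset.univ.image b, ((lap w).toSquareBlock b a).charpoly ≠ 0 :=
    fun a _ => (Matrix.charpoly_monic _).ne_zero
  have hprodne : (∏ a ∈ Finset.univ.image b, ((lap w).toSquareBlock b a).charpoly) ≠ 0 :=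
    Finset.prod_ne_zero_iff.mpr hne0
  have hroots : (lap w).charpoly.roots =
      (Finset.univ.image b).val.bind (fun a => ((lap w).toSquareBlock b a).charpoly.roots) := by
    rw [hchar]
    exact Polynomial.roots_prod _ _ hprodne
  set P : ℂ → Prop := fun lam => lam ≠ 0 ∧ lam ≠ 1 with hP
  set C : Finset V := Finset.univ.filter (fun i => Cyc i) with hCdef
  -- per-block bound
  have hblock : ∀ a ∈ Finset.univ.image b,
      (((lap w).toSquareBlock b a).charpoly.roots.filter P).card ≤
        (C.filter fun i => b i = a).card := by
    intro a ha
    obtain ⟨i, -, hbi⟩ := Finset.mem_image.1 ha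
    have htiecong : ∀ j, b j = a → tie j = tie i := by
      intro j hbj
      have := hbj.trans hbi.symm
      exact congrArg (fun x => (ofLex x).2) this
    by_cases hc : Cyc i
    · -- the whole fiber is cyclic
      have hfib : ∀ j, b j = a → Cyc j := by
        intro j hbj
        by_contra hcj
        have h2 := htiecong j hbj
        simp only [htie, if_pos hc, if_neg hcj] at h2
        omega
      have hfibeq : (Finset.univ.filter fun j => b j = a) = (C.filter fun i => b i = a) := by
        ext j
        simp only [Finset.mem_filter, Finset.mem_univ, true_and, hCdef]
        exact ⟨fun hbj => ⟨hfib j hbj, hbj⟩, fun h => h.2⟩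
      calc (((lap w).toSquareBlock b a).charpoly.roots.filter P).card
          ≤ (((lap w).toSquareBlock b a).charpoly.roots).card :=
            Multiset.card_le_card (Multiset.filter_le _ _)
        _ ≤ (((lap w).toSquareBlock b a).charpoly).natDegree := Polynomial.card_roots' _
        _ = Fintype.card {j // b j = a} := Matrix.charpoly_natDegree_eq_dim _
        _ = (Finset.univ.filter fun j => b j = a).card := Fintype.card_subtype _
        _ = (C.filter fun i => b i = a).card := by rw [hfibeq]
    · -- the fiber is the singleton `{i}` and the eigenvalue is 0 or 1
      have huniq : ∀ j, b j = a → j = i := by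
        intro j hbj
        have h2 := htiecong j hbj
        by_cases hcj : Cyc j
        · simp only [htie, if_pos hcj, if_neg hc] at h2
          omega
        · simp only [htie, if_neg hcj, if_neg hc] at h2
          exact (Fintype.equivFin V).injective (Fin.ext (by omega))
      haveI : Unique {j // b j = a} :=
        ⟨⟨⟨i, hbi⟩⟩, fun j => Subtype.ext (huniq j.1 j.2)⟩
      have hcp : ((lap w).toSquareBlock b a).charpoly =
          Polynomial.X - Polynomial.C (lap w i i) := by
        rw [Matrix.charpoly, Matrix.det_unique, Matrix.charmatrix_apply_eq]
        simp only [Matrix.toSquareBlock_def]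
        norm_num
        have hd : ((default : {j // b j = a}) : V) = i := huniq _ (default : {j // b j = a}).2
        rw [hd]
      have hl : lap w i i = 0 ∨ lap w i i = 1 := by
        by_cases hd : din w i = 0
        · left; simp [lap, hd]
        · right; simp [lap, hd, hloop i]
      rw [hcp, Polynomial.roots_X_sub_C]
      rcases hl with hl | hl <;>
        simp [hl, hP, Multiset.filter_singleton]
  -- combine
  have hcount : ((lap w).charpoly.roots.filter P).card ≤ C.card := by
    rw [hroots, filter_bind_aux, Multiset.card_bind]
    have hsum : ((Finset.univ.image b).val.map
        (Multiset.card ∘ fun a => (((lap w).toSquareBlock b a).charpoly.roots.filter P))).sum =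
        ∑ a ∈ Finset.univ.image b,
          (((lap w).toSquareBlock b a).charpoly.roots.filter P).card := rfl
    rw [hsum]
    have hCcard : C.card = ∑ a ∈ Finset.univ.image b, (C.filter fun i => b i = a).card :=
      Finset.card_eq_sum_card_fiberwise
        (fun x _ => Finset.mem_image_of_mem b (Finset.mem_univ x))
    rw [hCcard]
    exact Finset.sum_le_sum hblock
  have hfinal : k ≤ C.card := le_trans h hcount
  have hCset : (↑C : Set V) = {i : V | Cyc i} := by
    ext j; simp [hCdef]
  calc k ≤ C.card := hfinal
    _ = (↑C : Set V).ncard := (Set.ncard_coe_finset C).symm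
    _ = {i : V | Cyc i}.ncard := by rw [hCset]
    _ ≤ {i : V | CyclicVertex w i}.ncard := Set.ncard_le_ncard hsub (Set.toFinite _)
end

section
/- Let Γ be a weighted directed graph on a finite vertex set V and let λ ≠ 1 be an eigenvalue of P := I − Δ with |λ| = r. Then there is a strongly connected component Γ_k of Γ, with vertex set V_k containing at least two vertices, such that λ is an eigenvalue of the Dirichlet operator P_k := I_{V_k} − Δ_{V_k} on C(V_k); moreover, every eigenfunction u : V_k → ℂ of P_k for the eigenvalue λ has constant modulus: |u(i)| = |u(j)| for all i, j ∈ V_k. -/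
/-! ### Auxiliary lemmas -/

lemma P_apply {V : Type*} [Fintype V] [DecidableEq V] (w : V → V → ℝ) (i j : V) :
    ((1 : Matrix V V ℂ) - lap w) i j =
      if din w i = 0 then (if i = j then 1 else 0)
      else ((w i j / din w i : ℝ) : ℂ) := by
  simp only [Matrix.sub_apply, Matrix.one_apply, lap, Matrix.of_apply]
  split_ifs with h h' <;> ring

lemma Q_apply {V : Type*} [Fintype V] [DecidableEq V] (w : V → V → ℝ) (S : Finset V)
    (i j : {x // x ∈ S}) :
    ((1 : Matrix {x // x ∈ S} {x // x ∈ S} ℂ) - dlap w S) i j =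
      if din w i.1 = 0 then (if i = j then 1 else 0)
      else ((w i.1 j.1 / din w i.1 : ℝ) : ℂ) := by
  simp only [Matrix.sub_apply, Matrix.one_apply, dlap, Matrix.of_apply]
  split_ifs with h h' <;> ring


lemma reaches_single {V : Type*} (w : V → V → ℝ) {i j : V} (h : w i j ≠ 0) : reaches w j i :=
  Relation.ReflTransGen.single h

lemma reaches_trans {V : Type*} {w : V → V → ℝ} {a b c : V} (h1 : reaches w a b)
    (h2 : reaches w b c) : reaches w a c :=
  Relation.ReflTransGen.trans h1 h2

lemma charpoly_root_iff {n : Type*} [Fintype n] [DecidableEq n] (M : Matrix n n ℂ) (μ : ℂ) :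
    μ ∈ M.charpoly.roots ↔ ∃ v, v ≠ 0 ∧ M.mulVec v = μ • v := by
  have hdet : Polynomial.eval μ M.charpoly = (Matrix.scalar n μ - M).det := by
    rw [Matrix.charpoly, eval_det, Matrix.matPolyEquiv_charmatrix]
    simp
  rw [Polynomial.mem_roots (M.charpoly_monic.ne_zero), Polynomial.IsRoot, hdet,
    ← Matrix.exists_mulVec_eq_zero_iff]
  constructor
  · rintro ⟨v, hv, h⟩
    refine ⟨v, hv, ?_⟩
    rw [Matrix.sub_mulVec] at h
    have hs : (Matrix.scalar n μ).mulVec v = μ • v := by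
      funext i
      simp [Matrix.scalar_apply, Matrix.mulVec_diagonal]
    rw [hs] at h
    exact (sub_eq_zero.mp h).symm
  · rintro ⟨v, hv, h⟩
    refine ⟨v, hv, ?_⟩
    rw [Matrix.sub_mulVec]
    have hs : (Matrix.scalar n μ).mulVec v = μ • v := by
      funext i
      simp [Matrix.scalar_apply, Matrix.mulVec_diagonal]
    rw [hs, h, sub_self]

/-- The key "tight triangle inequality" step of the maximum principle. -/
lemma tight {V : Type*} [Fintype V] [Nonempty V] (w : V → V → ℝ) (lam : ℂ)
    (habs : ‖lam‖ = rmax w)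
    (A : Finset V) (f : V → ℂ) (M : ℝ) (hM : ∀ j ∈ A, ‖f j‖ ≤ M)
    (i : V) (hfi : ‖f i‖ = M) (hd : din w i ≠ 0)
    (heq : lam * f i = ∑ j ∈ A, ((w i j / din w i : ℝ) : ℂ) * f j) :
    ∀ j ∈ A, w i j ≠ 0 → ‖f j‖ = M := by
  have hM0 : 0 ≤ M := hfi ▸ norm_nonneg _
  set d : ℝ := |din w i| with hdd
  have hd0 : 0 < d := abs_pos.mpr hd
  have hr : (∑ j, |w i j|) ≤ rmax w * d := by
    have h1 : rfun w i ≤ rmax w := Finset.le_sup' _ (Finset.mem_univ i)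
    rw [rfun, if_neg hd] at h1
    calc (∑ j, |w i j|) = ((∑ j, |w i j|) / d) * d := by field_simp
    _ ≤ rmax w * d := mul_le_mul_of_nonneg_right h1 hd0.le
  have c1 : ‖lam‖ * M ≤ ∑ j ∈ A, (|w i j| / d) * ‖f j‖ := by
    calc ‖lam‖ * M = ‖lam * f i‖ := by rw [norm_mul, hfi]
    _ = ‖∑ j ∈ A, ((w i j / din w i : ℝ) : ℂ) * f j‖ := by rw [heq]
    _ ≤ ∑ j ∈ A, ‖((w i j / din w i : ℝ) : ℂ) * f j‖ :=
        norm_sum_le _ _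
    _ = ∑ j ∈ A, (|w i j| / d) * ‖f j‖ := by
        refine Finset.sum_congr rfl fun j _ => ?_
        rw [norm_mul, Complex.norm_real, Real.norm_eq_abs, abs_div]
  have c3 : ∑ j ∈ A, (|w i j| / d) * M ≤ ‖lam‖ * M := by
    calc ∑ j ∈ A, (|w i j| / d) * M ≤ ∑ j, (|w i j| / d) * M := by
          refine Finset.sum_le_sum_of_subset_of_nonneg (Finset.subset_univ A) ?_
          intro j _ _
          positivity
    _ = (∑ j, |w i j|) / d * M := by rw [Finset.sum_div, Finset.sum_mul]
    _ ≤ rmax w * M := by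
          refine mul_le_mul_of_nonneg_right ?_ hM0
          rw [div_le_iff₀ hd0]
          exact hr
    _ = ‖lam‖ * M := by rw [habs]
  have c2 : ∀ j ∈ A, (|w i j| / d) * ‖f j‖ ≤ (|w i j| / d) * M := fun j hj =>
    mul_le_mul_of_nonneg_left (hM j hj) (by positivity)
  have heqsum : ∑ j ∈ A, (|w i j| / d) * ‖f j‖ = ∑ j ∈ A, (|w i j| / d) * M :=
    le_antisymm (Finset.sum_le_sum c2) (c3.trans c1)
  have hterm := (Finset.sum_eq_sum_iff_of_le c2).1 heqsum
  intro j hj hwj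
  have h := hterm j hj
  have hne : |w i j| / d ≠ 0 := div_ne_zero (abs_ne_zero.mpr hwj) hd0.ne'
  exact mul_left_cancel₀ hne h

/-- if `λ ≠ 1` is an eigenvalue of `P = I - Δ` with `|λ| = r`, then `λ` is an
eigenvalue of the Dirichlet operator `P_k = I - Δ_{V_k}` of some strongly connected
component `Γ_k` with at least two vertices, and every eigenfunction of `P_k` for `λ` has
constant modulus. -/
theorem extremal_eigenvalue_constant_modulus {V : Type*} [Fintype V] [DecidableEq V]
    [Nonempty V] (w : V → V → ℝ) (hloop : ∀ i, w i i = 0)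
    (lam : ℂ) (hne : lam ≠ 1)
    (hev : lam ∈ ((1 : Matrix V V ℂ) - lap w).charpoly.roots)
    (habs : ‖lam‖ = rmax w) :
    ∃ S : Finset V, IsSCC w S ∧ 2 ≤ S.card ∧
      lam ∈ ((1 : Matrix {x // x ∈ S} {x // x ∈ S} ℂ) - dlap w S).charpoly.roots ∧
      ∀ u : {x // x ∈ S} → ℂ, u ≠ 0 →
        Matrix.mulVec ((1 : Matrix {x // x ∈ S} {x // x ∈ S} ℂ) - dlap w S) u = lam • u →
        ∀ i j : {x // x ∈ S}, ‖u i‖ = ‖u j‖ := by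
  classical
  obtain ⟨v, hv0, hvEq⟩ := (charpoly_root_iff _ lam).1 hev
  have hP : ∀ i, ∑ j, ((1 : Matrix V V ℂ) - lap w) i j * v j = lam * v i := by
    intro i
    have := congrFun hvEq i
    simpa [Matrix.mulVec, dotProduct] using this
  have hzero : ∀ i, din w i = 0 → v i = 0 := by
    intro i hdi
    have h := hP i
    rw [Finset.sum_congr rfl (fun j _ => by rw [P_apply, if_pos hdi])] at h
    have hsum : ∑ j, (if i = j then (1 : ℂ) else 0) * v j = v i := by
      simp [ite_mul]
    rw [hsum] at h
    have h2 : (lam - 1) * v i = 0 := by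
      rw [sub_mul, one_mul, ← h, sub_self]
    rcases mul_eq_zero.1 h2 with h' | h'
    · exact absurd (sub_eq_zero.mp h') hne
    · exact h'
  have hpos : ∀ i, din w i ≠ 0 → lam * v i = ∑ j, ((w i j / din w i : ℝ) : ℂ) * v j := by
    intro i hdi
    have h := hP i
    rw [Finset.sum_congr rfl (fun j _ => by rw [P_apply, if_neg hdi])] at h
    exact h.symm
  obtain ⟨i0, hi0⟩ := Finite.exists_max fun i => ‖v i‖
  set M : ℝ := ‖v i0‖ with hM
  have hMpos : 0 < M := by
    rcases lt_or_ge 0 M with h | h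
    · exact h
    · exfalso
      apply hv0
      funext i
      have h1 : ‖v i‖ ≤ 0 := (hi0 i).trans h
      have : ‖v i‖ = 0 := le_antisymm h1 (norm_nonneg _)
      simpa using this
  have hTdin : ∀ i, ‖v i‖ = M → din w i ≠ 0 := by
    intro i hi hdi
    rw [hzero i hdi] at hi
    simp at hi
    exact absurd hi.symm hMpos.ne'
  have hTclosed : ∀ i, ‖v i‖ = M → ∀ j, w i j ≠ 0 → ‖v j‖ = M := by
    intro i hi j hj
    exact tight w lam habs Finset.univ v M (fun j _ => hi0 j) i hi (hTdin i hi)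
      (by simpa using hpos i (hTdin i hi)) j (Finset.mem_univ j) hj
  have hTreach : ∀ i, ‖v i‖ = M → ∀ j, reaches w j i → ‖v j‖ = M := by
    intro i hi j hreach
    refine Relation.ReflTransGen.head_induction_on hreach hi ?_
    intro a c hac _ ih
    exact hTclosed c ih a hac
  set R : V → Finset V := fun i => Finset.univ.filter fun j => reaches w j i with hRdef
  obtain ⟨istar, histar0, hmin⟩ :=
    Finset.exists_min_image (Finset.univ.filter fun i => ‖v i‖ = M)
      (fun i => (R i).card) ⟨i0, by simp [hM]⟩
  rw [Finset.mem_filter] at histar0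
  have histar : ‖v istar‖ = M := histar0.2
  set S : Finset V := R istar with hSdef
  have hmemS : ∀ j, j ∈ S ↔ reaches w j istar := by
    intro j; simp [hSdef, hRdef]
  have histarS : istar ∈ S := (hmemS istar).2 Relation.ReflTransGen.refl
  have hSsubT : ∀ j ∈ S, ‖v j‖ = M := fun j hj =>
    hTreach istar histar j ((hmemS j).1 hj)
  have hback : ∀ j ∈ S, reaches w istar j := by
    intro j hj
    have hjT := hSsubT j hj
    have hsub : R j ⊆ R istar := by
      intro k hk
      rw [Finset.mem_filter] at hk ⊢
      exact ⟨Finset.mem_univ k, reaches_trans hk.2 ((hmemS j).1 hj)⟩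
    have hcard : (R istar).card ≤ (R j).card :=
      hmin j (by rw [Finset.mem_filter]; exact ⟨Finset.mem_univ j, hjT⟩)
    have hRE : R j = R istar := Finset.eq_of_subset_of_card_le hsub hcard
    have : istar ∈ R j := hRE ▸ histarS
    rw [Finset.mem_filter] at this
    exact this.2
  have hSclosed : ∀ i ∈ S, ∀ j, w i j ≠ 0 → j ∈ S := by
    intro i hiS j hw
    rw [hmemS] at hiS ⊢
    exact reaches_trans (reaches_single w hw) hiS
  have hSCC : IsSCC w S := by
    refine ⟨⟨istar, histarS⟩, ?_⟩
    intro i hiS j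
    constructor
    · intro hjS
      exact ⟨reaches_trans ((hmemS i).1 hiS) (hback j hjS), reaches_trans ((hmemS j).1 hjS) (hback i hiS)⟩
    · rintro ⟨_, hji⟩
      rw [hmemS]
      exact reaches_trans hji ((hmemS i).1 hiS)
  have hdinS : ∀ i ∈ S, din w i ≠ 0 := fun i hi => hTdin i (hSsubT i hi)
  -- two vertices
  have hcard2 : 2 ≤ S.card := by
    have hd := hdinS istar histarS
    have hex : ∃ j, w istar j ≠ 0 := by
      by_contra h
      push_neg at h
      exact hd (Finset.sum_eq_zero fun j _ => h j)
    obtain ⟨j, hwj⟩ := hex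
    have hjne : istar ≠ j := fun h => hwj (h ▸ hloop istar)
    have hjS : j ∈ S := hSclosed istar histarS j hwj
    exact Finset.one_lt_card.2 ⟨istar, histarS, j, hjS, hjne⟩
  -- restriction of v is a Dirichlet eigenvector
  set u0 : {x // x ∈ S} → ℂ := fun i => v i.1 with hu0def
  have hu00 : u0 ≠ 0 := by
    intro h
    have h1 : v istar = 0 := congrFun h ⟨istar, histarS⟩
    rw [h1] at histar
    simp at histar
    exact absurd histar.symm hMpos.ne'
  have hsum_eq : ∀ i : {x // x ∈ S},
      ∑ j : {x // x ∈ S}, ((w i.1 j.1 / din w i.1 : ℝ) : ℂ) * v j.1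
        = ∑ j, ((w i.1 j / din w i.1 : ℝ) : ℂ) * v j := by
    intro i
    rw [Finset.sum_coe_sort S (fun x => ((w i.1 x / din w i.1 : ℝ) : ℂ) * v x)]
    refine Finset.sum_subset (Finset.subset_univ S) ?_
    intro x _ hx
    have hwx : w i.1 x = 0 := by
      by_contra h
      exact hx (hSclosed i.1 i.2 x h)
    simp [hwx]
  have hEigS : ((1 : Matrix {x // x ∈ S} {x // x ∈ S} ℂ) - dlap w S).mulVec u0 = lam • u0 := by
    funext i
    have hdi := hdinS i.1 i.2
    show ∑ j, ((1 : Matrix {x // x ∈ S} {x // x ∈ S} ℂ) - dlap w S) i j * u0 j = lam * u0 i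
    rw [Finset.sum_congr rfl fun j _ => by rw [Q_apply, if_neg hdi]]
    rw [hu0def]
    simp only
    rw [hsum_eq i]
    exact (hpos i.1 hdi).symm
  refine ⟨S, hSCC, hcard2, (charpoly_root_iff _ lam).2 ⟨u0, hu00, hEigS⟩, ?_⟩
  -- constant modulus
  intro u hu0' huEig
  have hPu : ∀ i : {x // x ∈ S},
      ∑ j, ((1 : Matrix {x // x ∈ S} {x // x ∈ S} ℂ) - dlap w S) i j * u j = lam * u i := by
    intro i
    have := congrFun huEig i
    simpa [Matrix.mulVec, dotProduct] using this
  have huzero : ∀ i : {x // x ∈ S}, din w i.1 = 0 → u i = 0 := by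
    intro i hdi
    have h := hPu i
    rw [Finset.sum_congr rfl (fun j _ => by rw [Q_apply, if_pos hdi])] at h
    have hsum : ∑ j, (if i = j then (1 : ℂ) else 0) * u j = u i := by
      simp [ite_mul]
    rw [hsum] at h
    have h2 : (lam - 1) * u i = 0 := by
      rw [sub_mul, one_mul, ← h, sub_self]
    rcases mul_eq_zero.1 h2 with h' | h'
    · exact absurd (sub_eq_zero.mp h') hne
    · exact h'
  haveI : Nonempty {x // x ∈ S} := ⟨⟨istar, histarS⟩⟩
  obtain ⟨im, him⟩ := Finite.exists_max fun i : {x // x ∈ S} => ‖u i‖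
  set Mu : ℝ := ‖u im‖ with hMu
  have hMupos : 0 < Mu := by
    rcases lt_or_ge 0 Mu with h | h
    · exact h
    · exfalso
      apply hu0'
      funext i
      have h1 : ‖u i‖ ≤ 0 := (him i).trans h
      have : ‖u i‖ = 0 := le_antisymm h1 (norm_nonneg _)
      simpa using this
  have hudin : ∀ i : {x // x ∈ S}, ‖u i‖ = Mu → din w i.1 ≠ 0 := by
    intro i hi hdi
    rw [huzero i hdi] at hi
    simp at hi
    exact absurd hi.symm hMupos.ne'
  set f : V → ℂ := fun x => if hx : x ∈ S then u ⟨x, hx⟩ else 0 with hfdef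
  have hfu : ∀ (x : V) (hx : x ∈ S), f x = u ⟨x, hx⟩ := fun x hx => dif_pos hx
  have hMf : ∀ x ∈ S, ‖f x‖ ≤ Mu := by
    intro x hx
    rw [hfu x hx]
    exact him _
  have hequ : ∀ i : {x // x ∈ S}, din w i.1 ≠ 0 →
      lam * f i.1 = ∑ x ∈ S, ((w i.1 x / din w i.1 : ℝ) : ℂ) * f x := by
    intro i hdi
    have h := hPu i
    rw [Finset.sum_congr rfl (fun j _ => by rw [Q_apply, if_neg hdi])] at h
    rw [hfu i.1 i.2]
    rw [← Finset.sum_coe_sort S (fun x => ((w i.1 x / din w i.1 : ℝ) : ℂ) * f x)]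
    rw [← h]
    refine Finset.sum_congr rfl fun j _ => ?_
    rw [hfu j.1 j.2]
  have hclosedu : ∀ i : {x // x ∈ S}, ‖u i‖ = Mu →
      ∀ j : {x // x ∈ S}, w i.1 j.1 ≠ 0 → ‖u j‖ = Mu := by
    intro i hi j hw
    have hdi := hudin i hi
    have := tight w lam habs S f Mu hMf i.1 (by rw [hfu i.1 i.2]; exact hi) hdi
      (hequ i hdi) j.1 j.2 hw
    rwa [hfu j.1 j.2] at this
  have hclaim : ∀ x, reaches w x im.1 → x ∈ S → ‖f x‖ = Mu := by
    intro x hx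
    refine Relation.ReflTransGen.head_induction_on hx ?_ ?_
    · intro _
      rw [hfu im.1 im.2]
    · intro a c hac hcr ih haS
      have haC : reaches w a c := reaches_single w hac
      have hima : reaches w im.1 a := ((hSCC.2 a haS im.1).1 im.2).2
      have hcS : c ∈ S := (hSCC.2 im.1 im.2 c).2 ⟨reaches_trans hima haC, hcr⟩
      have hc : ‖u ⟨c, hcS⟩‖ = Mu := by
        rw [← hfu c hcS]
        exact ih hcS
      have := hclosedu ⟨c, hcS⟩ hc ⟨a, haS⟩ hac
      rw [hfu a haS]
      exact this
  intro i j
  have hi : ‖u i‖ = Mu := by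
    have hr : reaches w i.1 im.1 := ((hSCC.2 i.1 i.2 im.1).1 im.2).1
    have := hclaim i.1 hr i.2
    rwa [hfu i.1 i.2] at this
  have hj : ‖u j‖ = Mu := by
    have hr : reaches w j.1 im.1 := ((hSCC.2 j.1 j.2 im.1).1 im.2).1
    have := hclaim j.1 hr j.2
    rwa [hfu j.1 j.2] at this
  rw [hi, hj]
end

section
/- Let Γ be a weighted directed graph on a finite vertex set V and let λ ≠ 0 be an eigenvalue of the normalized Laplace operator Δ with |1 − λ| = r. Then Γ possesses a strongly connected component with at least two vertices that is both isolated and maximal (maximal means every vertex i of the component satisfies r(i) = r). -/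
lemma lap_exists_eigvec {V : Type*} [Fintype V] [DecidableEq V] (w : V → V → ℝ)
    {lam : ℂ} (hev : lam ∈ specL w) :
    ∃ v : V → ℂ, v ≠ 0 ∧ (lap w).mulVec v = lam • v := by
  have hroot : (lap w).charpoly.eval lam = 0 :=
    (Polynomial.isRoot_of_mem_roots hev)
  have heval : (lap w).charpoly.eval lam = (Matrix.scalar V lam - lap w).det := by
    rw [Matrix.charpoly, eval_det, Matrix.matPolyEquiv_charmatrix]
    simp
  have hdet : (Matrix.scalar V lam - lap w).det = 0 := by rw [← heval, hroot]
  obtain ⟨v, hv0, hv⟩ := Matrix.exists_mulVec_eq_zero_iff.mpr hdet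
  refine ⟨v, hv0, ?_⟩
  rw [Matrix.sub_mulVec, sub_eq_zero] at hv
  rw [← hv]
  ext i
  simp [Matrix.mulVec, dotProduct, Matrix.scalar, Matrix.diagonal, Finset.mul_sum,
    ite_mul, Finset.sum_ite_eq]

/-- if `λ ≠ 0` is an eigenvalue of `Δ` with `|1 - λ| = r`, then `Γ` has a
strongly connected component with at least two vertices that is isolated and maximal
(every vertex `i` of the component satisfies `r(i) = r`). -/
theorem extremal_eigenvalue_maximal_isolated_scc {V : Type*} [Fintype V] [DecidableEq V]
    [Nonempty V] (w : V → V → ℝ) (hloop : ∀ i, w i i = 0)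
    (lam : ℂ) (hne : lam ≠ 0) (hev : lam ∈ specL w)
    (habs : ‖1 - lam‖ = rmax w) :
    ∃ S : Finset V, IsSCC w S ∧ 2 ≤ S.card ∧
      (∀ i ∈ S, ∀ j ∉ S, w i j = 0) ∧
      (∀ i ∈ S, rfun w i = rmax w) := by
  classical
  obtain ⟨v, hv0, hv⟩ := lap_exists_eigvec w hev
  set M : ℝ := Finset.univ.sup' Finset.univ_nonempty (fun i => ‖v i‖) with hMdef
  have hMle : ∀ i, ‖v i‖ ≤ M := by
    intro i
    rw [hMdef]
    exact Finset.le_sup' (fun i => ‖v i‖) (Finset.mem_univ i)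
  have hMpos : 0 < M := by
    obtain ⟨k, hk⟩ : ∃ k, v k ≠ 0 := by
      by_contra h; push_neg at h; exact hv0 (funext h)
    exact lt_of_lt_of_le (norm_pos_iff.mpr hk) (hMle k)
  have hrow : ∀ i, ∑ j, lap w i j * v j = lam * v i := by
    intro i
    have := congrFun hv i
    simpa [Matrix.mulVec, dotProduct] using this
  -- key pointwise lemma
  have key : ∀ i, ‖v i‖ = M →
      din w i ≠ 0 ∧ rfun w i = rmax w ∧ ∀ j, w i j ≠ 0 → ‖v j‖ = M := by
    intro i hiM
    have hvi : v i ≠ 0 := by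
      intro h
      rw [h, norm_zero] at hiM
      exact absurd hiM.symm (ne_of_gt hMpos)
    have hd : din w i ≠ 0 := by
      intro hd0
      have h0 : ∑ j, lap w i j * v j = 0 := by
        simp [lap, hd0]
      exact mul_ne_zero hne hvi ((hrow i).symm.trans h0)
    have hsum : ∑ j, ((w i j / din w i : ℝ) : ℂ) * v j = (1 - lam) * v i := by
      have h1 : ∑ j, lap w i j * v j
          = v i - ∑ j, ((w i j / din w i : ℝ) : ℂ) * v j := by
        simp only [lap, Matrix.of_apply, if_neg hd, sub_mul, ite_mul, one_mul, zero_mul]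
        rw [Finset.sum_sub_distrib, Finset.sum_ite_eq]
        simp
      linear_combination h1 - hrow i
    set a : V → ℝ := fun j => |w i j| / |din w i| with ha
    have ha_nonneg : ∀ j, 0 ≤ a j := fun j => div_nonneg (abs_nonneg _) (abs_nonneg _)
    have hrfun : rfun w i = ∑ j, a j := by
      rw [rfun, if_neg hd, Finset.sum_div]
    have hrle : rfun w i ≤ rmax w := Finset.le_sup' (rfun w) (Finset.mem_univ i)
    have hstep1 : rmax w * M = ‖∑ j, ((w i j / din w i : ℝ) : ℂ) * v j‖ := by
      rw [hsum, norm_mul, habs, hiM]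
    have habsterm : ∀ j, ‖((w i j / din w i : ℝ) : ℂ) * v j‖
        = a j * ‖v j‖ := by
      intro j
      rw [norm_mul, Complex.norm_real, Real.norm_eq_abs, abs_div]
    have hstep2 : ‖∑ j, ((w i j / din w i : ℝ) : ℂ) * v j‖
        ≤ ∑ j, a j * ‖v j‖ := by
      refine le_trans (norm_sum_le _ _) ?_
      refine le_of_eq (Finset.sum_congr rfl fun j _ => habsterm j)
    have htermle : ∀ j ∈ Finset.univ, a j * ‖v j‖ ≤ a j * M := by
      intro j _
      exact mul_le_mul_of_nonneg_left (hMle j) (ha_nonneg j)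
    have hstep3 : ∑ j, a j * ‖v j‖ ≤ rfun w i * M := by
      rw [hrfun, Finset.sum_mul]
      exact Finset.sum_le_sum htermle
    have hstep4 : rfun w i * M ≤ rmax w * M :=
      mul_le_mul_of_nonneg_right hrle (le_of_lt hMpos)
    -- equalities everywhere
    have hAeq : ∑ j, a j * ‖v j‖ = rfun w i * M :=
      le_antisymm hstep3 (by
        calc rfun w i * M ≤ rmax w * M := hstep4
        _ = _ := hstep1
        _ ≤ _ := hstep2)
    have hreq : rfun w i * M = rmax w * M := by
      refine le_antisymm hstep4 ?_
      calc rmax w * M = _ := hstep1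
        _ ≤ _ := hstep2
        _ ≤ _ := hstep3
    have hrfun_eq : rfun w i = rmax w := mul_right_cancel₀ (ne_of_gt hMpos) hreq
    refine ⟨hd, hrfun_eq, ?_⟩
    have hterms : ∀ j ∈ Finset.univ, a j * ‖v j‖ = a j * M := by
      rw [← Finset.sum_eq_sum_iff_of_le htermle]
      rw [hAeq, hrfun, Finset.sum_mul]
    intro j hwij
    have haj : a j ≠ 0 := by
      refine div_ne_zero (abs_ne_zero.mpr hwij) (abs_ne_zero.mpr hd)
    exact mul_left_cancel₀ haj (hterms j (Finset.mem_univ j))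
  -- closure of the max set under predecessors
  have hclose : ∀ k i, ‖v i‖ = M → reaches w k i → ‖v k‖ = M := by
    intro k i hi hreach
    induction hreach using Relation.ReflTransGen.head_induction_on with
    | refl => exact hi
    | head h _ ih => exact (key _ ih).2.2 _ h
  -- choose a minimal vertex in the max set
  obtain ⟨km, hkm⟩ := Finset.exists_mem_eq_sup' Finset.univ_nonempty (fun i => ‖v i‖)
  have hkmM : ‖v km‖ = M := hkm.2.symm
  set f : V → ℕ := fun i => (Finset.univ.filter (fun k => reaches w k i)).card with hf
  have hS0ne : (Finset.univ.filter (fun i => ‖v i‖ = M)).Nonempty :=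
    ⟨km, Finset.mem_filter.mpr ⟨Finset.mem_univ _, hkmM⟩⟩
  obtain ⟨i₀, hi₀mem, hi₀min⟩ := Finset.exists_min_image _ f hS0ne
  have hi₀M : ‖v i₀‖ = M := (Finset.mem_filter.mp hi₀mem).2
  have hsub : ∀ {a b : V}, reaches w a b →
      (Finset.univ.filter (fun k => reaches w k a)) ⊆
        (Finset.univ.filter (fun k => reaches w k b)) := by
    intro a b hab
    intro k hk
    rw [Finset.mem_filter] at hk ⊢
    exact ⟨hk.1, hk.2.trans hab⟩
  have hup : ∀ a, reaches w a i₀ → reaches w i₀ a := by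
    intro a ha
    have haM : ‖v a‖ = M := hclose a i₀ hi₀M ha
    have h1 : f i₀ ≤ f a :=
      hi₀min a (Finset.mem_filter.mpr ⟨Finset.mem_univ _, haM⟩)
    have heq : (Finset.univ.filter (fun k => reaches w k a))
        = (Finset.univ.filter (fun k => reaches w k i₀)) :=
      Finset.eq_of_subset_of_card_le (hsub ha) h1
    have : i₀ ∈ Finset.univ.filter (fun k => reaches w k a) := by
      rw [heq]
      exact Finset.mem_filter.mpr ⟨Finset.mem_univ _, Relation.ReflTransGen.refl⟩
    exact (Finset.mem_filter.mp this).2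
  set S : Finset V := Finset.univ.filter (fun k => reaches w i₀ k ∧ reaches w k i₀) with hS
  have hi₀S : i₀ ∈ S :=
    Finset.mem_filter.mpr ⟨Finset.mem_univ _,
      Relation.ReflTransGen.refl, Relation.ReflTransGen.refl⟩
  have hmemS : ∀ {a}, a ∈ S ↔ (reaches w i₀ a ∧ reaches w a i₀) := by
    intro a
    simp [hS]
  have hiso : ∀ a ∈ S, ∀ j, w a j ≠ 0 → j ∈ S := by
    intro a haS j hwaj
    obtain ⟨h1, h2⟩ := hmemS.mp haS
    have hja : reaches w j a := Relation.ReflTransGen.single hwaj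
    have hji : reaches w j i₀ := hja.trans h2
    exact hmemS.mpr ⟨hup j hji, hji⟩
  have hSM : ∀ a ∈ S, ‖v a‖ = M := by
    intro a haS
    exact hclose a i₀ hi₀M (hmemS.mp haS).2
  refine ⟨S, ⟨⟨i₀, hi₀S⟩, ?_⟩, ?_, ?_, ?_⟩
  · intro a haS j
    obtain ⟨h1, h2⟩ := hmemS.mp haS
    constructor
    · intro hjS
      obtain ⟨g1, g2⟩ := hmemS.mp hjS
      exact ⟨h2.trans g1, g2.trans h1⟩
    · rintro ⟨g1, g2⟩
      exact hmemS.mpr ⟨h1.trans g1, g2.trans h2⟩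
  · -- 2 ≤ card
    have hd : din w i₀ ≠ 0 := (key i₀ hi₀M).1
    obtain ⟨j, hj⟩ : ∃ j, w i₀ j ≠ 0 := by
      by_contra h
      push_neg at h
      exact hd (by simp [din, h])
    have hjS : j ∈ S := hiso i₀ hi₀S j hj
    have hne' : i₀ ≠ j := by
      intro h
      exact hj (h ▸ hloop i₀)
    exact Finset.one_lt_card.mpr ⟨i₀, hi₀S, j, hjS, hne'⟩
  · intro i hiS j hjS
    by_contra h
    exact hjS (hiso i hiS j h)
  · intro i hiS
    exact (key i (hSM i hiS)).2.1
end

section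
/- Let Γ be a weighted directed graph on a finite vertex set V that is k-partite (k ≥ 2) and satisfies r(j) = r for all j ∈ V. Then for every λ⁺ ∈ ℂ: λ⁺ is an eigenvalue of Δ⁺ = Δ(Γ⁺) if and only if both 1 − r·e^{2πi/k}(1 − λ⁺) and 1 − r·e^{−2πi/k}(1 − λ⁺) are eigenvalues of Δ(Γ). -/
/-- The induced subgraph on `U` is `k`-partite (in-degrees computed in `Γ`): all in-degrees
are nonzero and `U` decomposes into `k` nonempty parts, indexed cyclically by `ZMod k`
via `f`, such that an edge from `j` to `i` with `w_{ij}/d_i^in > 0` goes from part `q - 1`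
to part `q`, while an edge with `w_{ij}/d_i^in < 0` (possible only for even `k`) goes from
part `q + l` to part `q`, where `l = k/2 - 1`. -/
def IsKPartite {V : Type*} [Fintype V] (w : V → V → ℝ) (U : Finset V) (k : ℕ) : Prop :=
  (∀ i ∈ U, din w i ≠ 0) ∧
  ∃ f : V → ZMod k,
    (∀ q : ZMod k, ∃ i ∈ U, f i = q) ∧
    ∀ i ∈ U, ∀ j ∈ U, w i j ≠ 0 →
      (0 < w i j / din w i → f i = f j + 1) ∧
      (w i j / din w i < 0 → Even k ∧ f j = f i + ((k / 2 - 1 : ℕ) : ZMod k))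

open Polynomial Matrix Complex in
lemma charpoly_eval_eq' {V : Type*} [Fintype V] [DecidableEq V]
    (M : Matrix V V ℂ) (t : ℂ) : M.charpoly.eval t = (t • (1 : Matrix V V ℂ) - M).det := by
  rw [Matrix.charpoly, ← Polynomial.coe_evalRingHom, RingHom.map_det]
  congr 1
  ext i j
  by_cases h : i = j
  · subst h
    simp [charmatrix_apply_eq, Matrix.one_apply]
  · simp [charmatrix_apply_ne _ _ _ h, Matrix.one_apply, h]

lemma mem_specL_iff' {V : Type*} [Fintype V] [DecidableEq V] (w : V → V → ℝ) (z : ℂ) :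
    z ∈ specL w ↔ (z • (1 : Matrix V V ℂ) - lap w).det = 0 := by
  rw [specL, Polynomial.mem_roots ((lap w).charpoly_monic.ne_zero), Polynomial.IsRoot,
    charpoly_eval_eq']

lemma conj_mem_specL' {V : Type*} [Fintype V] [DecidableEq V] (w : V → V → ℝ) (z : ℂ)
    (h : z ∈ specL w) : (starRingEnd ℂ) z ∈ specL w := by
  rw [mem_specL_iff'] at h ⊢
  have key : ((starRingEnd ℂ) z • (1 : Matrix V V ℂ) - lap w)
      = (z • (1 : Matrix V V ℂ) - lap w).map (starRingEnd ℂ) := by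
    ext i j
    simp only [Matrix.map_apply, Matrix.sub_apply, Matrix.smul_apply, Matrix.one_apply, lap,
      Matrix.of_apply, smul_eq_mul, map_sub, map_mul]
    split_ifs <;> simp [Complex.conj_ofReal]
  rw [key, show (z • (1 : Matrix V V ℂ) - lap w).map ⇑(starRingEnd ℂ)
      = (starRingEnd ℂ).mapMatrix (z • (1 : Matrix V V ℂ) - lap w) from rfl,
    ← RingHom.map_det, h, map_zero]


/-- if `Γ` is `k`-partite and `r(j) = r` for all `j ∈ V`, then `λ⁺` is an
eigenvalue of `Δ⁺ = Δ(Γ⁺)` (where `Γ⁺` has weights `|w_{ij}|`) iff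
`1 - r·e^{±2πi/k}(1 - λ⁺)` are both eigenvalues of `Δ(Γ)`. -/
theorem kpartite_spec_relation {V : Type*} [Fintype V] [DecidableEq V] [Nonempty V]
    (w : V → V → ℝ) (hloop : ∀ i, w i i = 0) (k : ℕ) (hk : 2 ≤ k)
    (hkp : IsKPartite w Finset.univ k) (hr : ∀ j, rfun w j = rmax w) (lamp : ℂ) :
    lamp ∈ specL (fun i j => |w i j|) ↔
      (1 - (rmax w : ℂ) * Complex.exp (2 * (Real.pi : ℂ) * Complex.I / (k : ℂ)) *
          (1 - lamp) ∈ specL w ∧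
       1 - (rmax w : ℂ) * Complex.exp (-(2 * (Real.pi : ℂ) * Complex.I) / (k : ℂ)) *
          (1 - lamp) ∈ specL w) := by

  classical
  obtain ⟨hd', f, -, hf⟩ := hkp
  have hd : ∀ i, din w i ≠ 0 := fun i => hd' i (Finset.mem_univ i)
  haveI : NeZero k := ⟨by omega⟩
  set r : ℝ := rmax w with hrdef
  -- basic facts about r
  have hsum : ∀ i, (∑ j, |w i j|) = r * |din w i| := by
    intro i
    have h1 := hr i
    rw [rfun, if_neg (hd i)] at h1
    rw [div_eq_iff (abs_ne_zero.mpr (hd i))] at h1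
    exact h1
  have hr1 : (1 : ℝ) ≤ r := by
    obtain ⟨i0⟩ := ‹Nonempty V›
    have h2 : |din w i0| ≤ ∑ j, |w i0 j| := by
      simpa [din] using Finset.abs_sum_le_sum_abs (fun j => w i0 j) Finset.univ
    rw [hsum i0] at h2
    exact (le_mul_iff_one_le_left (abs_pos.mpr (hd i0))).mp h2
  have hr0 : (0 : ℝ) < r := lt_of_lt_of_le one_pos hr1
  set ζ : ℂ := Complex.exp (2 * (Real.pi : ℂ) * Complex.I / (k : ℂ)) with hζdef
  have hk0 : (k : ℂ) ≠ 0 := Nat.cast_ne_zero.mpr (by omega)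
  have hζ0 : ζ ≠ 0 := Complex.exp_ne_zero _
  have hζk : ζ ^ k = 1 := by
    rw [hζdef, ← Complex.exp_nat_mul, mul_div_cancel₀ _ hk0, Complex.exp_two_pi_mul_I]
  have hhalf : Even k → ζ ^ (k / 2) = -1 := by
    intro hek
    obtain ⟨m, hm⟩ := hek
    have hm2 : k = 2 * m := by omega
    have hm0 : (m : ℂ) ≠ 0 := Nat.cast_ne_zero.mpr (by omega)
    have hkd : k / 2 = m := by omega
    rw [hkd, hζdef, ← Complex.exp_nat_mul,
      show ((m : ℂ) * (2 * (Real.pi : ℂ) * Complex.I / (k : ℂ))) = (Real.pi : ℂ) * Complex.I by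
        rw [hm2]; push_cast; field_simp]
    exact Complex.exp_pi_mul_I
  set c : ℂ := (r : ℂ) * ζ with hcdef
  have hc0 : c ≠ 0 := mul_ne_zero (by exact_mod_cast hr0.ne') hζ0
  -- powers of ζ indexed by ZMod k
  set φ : ZMod k → ℂ := fun a => ζ ^ a.val with hφdef
  have hmod : ∀ m : ℕ, ζ ^ (m % k) = ζ ^ m := by
    intro m
    conv_rhs => rw [← Nat.div_add_mod m k, pow_add, pow_mul, hζk, one_pow, one_mul]
  have hφadd : ∀ a b : ZMod k, φ (a + b) = φ a * φ b := by
    intro a b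
    simp only [hφdef]
    rw [ZMod.val_add, hmod, pow_add]
  have hφnat : ∀ m : ℕ, φ ((m : ℕ) : ZMod k) = ζ ^ m := by
    intro m
    simp only [hφdef]
    rw [ZMod.val_natCast, hmod]
  have hφone : φ 1 = ζ := by
    have := hφnat 1
    simpa using this
  have hφ0 : ∀ a : ZMod k, φ a ≠ 0 := fun a => pow_ne_zero _ hζ0

  -- the positive graph
  set wp : V → V → ℝ := fun i j => |w i j| with hwp
  have hdp : ∀ i, din wp i = r * |din w i| := by
    intro i
    simp only [din, hwp]
    exact hsum i
  have hdp0 : ∀ i, din wp i ≠ 0 := by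
    intro i
    rw [hdp i]
    exact (mul_pos hr0 (abs_pos.mpr (hd i))).ne'
  -- entries of the Laplacians
  have hlapw : ∀ i j, lap w i j = (if i = j then 1 else 0) - ((w i j / din w i : ℝ) : ℂ) := by
    intro i j
    simp [lap, if_neg (hd i)]
  have hlapp : ∀ i j, lap wp i j
      = (if i = j then 1 else 0) - ((|w i j| / (r * |din w i|) : ℝ) : ℂ) := by
    intro i j
    simp only [lap, Matrix.of_apply, if_neg (hdp0 i), hwp]
    rw [show din (fun i j => |w i j|) i = r * |din w i| from hdp i]
    rw [if_neg (mul_pos hr0 (abs_pos.mpr (hd i))).ne']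
  -- the key entrywise identity
  have hval : ∀ i j, w i j ≠ 0 →
      φ (f i) * ((w i j / din w i : ℝ) : ℂ)
        = ζ * ((|w i j| / |din w i| : ℝ) : ℂ) * φ (f j) := by
    intro i j hw
    rcases (div_ne_zero hw (hd i)).lt_or_gt with hneg | hpos
    · obtain ⟨hek, hfj⟩ := (hf i (Finset.mem_univ i) j (Finset.mem_univ j) hw).2 hneg
      have habs : |w i j| / |din w i| = -(w i j / din w i) := by
        rw [← abs_div]
        exact abs_of_neg hneg
      have h1 : ζ * ζ ^ (k / 2 - 1) = -1 := by
        have hsucc : k / 2 - 1 + 1 = k / 2 := by omega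
        calc ζ * ζ ^ (k / 2 - 1) = ζ ^ (k / 2 - 1 + 1) := by rw [pow_succ]; ring
          _ = ζ ^ (k / 2) := by rw [hsucc]
          _ = -1 := hhalf hek
      rw [hfj, hφadd, hφnat, habs, Complex.ofReal_neg]
      linear_combination (φ (f i) * ((w i j / din w i : ℝ) : ℂ)) * h1
    · have hfi := (hf i (Finset.mem_univ i) j (Finset.mem_univ j) hw).1 hpos
      have habs : |w i j| / |din w i| = w i j / din w i := by
        rw [← abs_div]
        exact abs_of_pos hpos
      rw [hfi, hφadd, hφone, habs]
      ring
  -- matrices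
  have hrC : (r : ℂ) ≠ 0 := by exact_mod_cast hr0.ne'
  set D : Matrix V V ℂ := Matrix.diagonal (fun i => φ (f i)) with hD
  have hDM : D * lap w = ((1 - c) • (1 : Matrix V V ℂ) + c • lap wp) * D := by
    ext i j
    rw [hD, Matrix.diagonal_mul, Matrix.mul_diagonal, Matrix.add_apply, Matrix.smul_apply,
      Matrix.smul_apply, Matrix.one_apply, hlapw, hlapp, smul_eq_mul, smul_eq_mul]
    by_cases hij : i = j
    · subst hij
      simp only [if_pos rfl, hloop i, abs_zero, zero_div, Complex.ofReal_zero, sub_zero, mul_one]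
      ring
    · simp only [if_neg hij]
      by_cases hw : w i j = 0
      · simp [hw]
      · have habsC : ((|din w i| : ℝ) : ℂ) ≠ 0 := by
          exact_mod_cast (abs_ne_zero.mpr (hd i))
        have hc2 : c * ((|w i j| / (r * |din w i|) : ℝ) : ℂ)
            = ζ * ((|w i j| / |din w i| : ℝ) : ℂ) := by
          rw [hcdef, Complex.ofReal_div, Complex.ofReal_div, Complex.ofReal_mul]
          field_simp [hrC, habsC]
        linear_combination (-1 : ℂ) * hval i j hw + φ (f j) * hc2
  have hDdet : D.det ≠ 0 := by
    rw [hD, Matrix.det_diagonal]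
    exact Finset.prod_ne_zero_iff.mpr fun i _ => hφ0 (f i)
  have hdeteq : ∀ z : ℂ, (z • (1 : Matrix V V ℂ) - lap w).det
      = (z • (1 : Matrix V V ℂ) - ((1 - c) • (1 : Matrix V V ℂ) + c • lap wp)).det := by
    intro z
    have hcomm : (z • (1 : Matrix V V ℂ) - ((1 - c) • (1 : Matrix V V ℂ) + c • lap wp)) * D
        = D * (z • (1 : Matrix V V ℂ) - lap w) := by
      rw [sub_mul, mul_sub, hDM, Matrix.smul_mul, one_mul, Matrix.mul_smul, mul_one]
    have h2 := congrArg Matrix.det hcomm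
    rw [Matrix.det_mul, Matrix.det_mul, mul_comm] at h2
    exact (mul_left_cancel₀ hDdet h2.symm)
  have hscal : ∀ z : ℂ,
      (z • (1 : Matrix V V ℂ) - ((1 - c) • (1 : Matrix V V ℂ) + c • lap wp))
        = c • (((z - 1 + c) / c) • (1 : Matrix V V ℂ) - lap wp) := by
    intro z
    rw [smul_sub, smul_smul, mul_div_cancel₀ _ hc0]
    module
  have hkey : ∀ z : ℂ, z ∈ specL w ↔ (z - 1 + c) / c ∈ specL wp := by
    intro z
    rw [mem_specL_iff', mem_specL_iff', hdeteq, hscal, Matrix.det_smul]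
    constructor
    · intro h
      rcases mul_eq_zero.mp h with h | h
      · exact absurd h (pow_ne_zero _ hc0)
      · exact h
    · intro h
      rw [h, mul_zero]
  -- conjugate of c
  have hconj : (starRingEnd ℂ) c
      = (r : ℂ) * Complex.exp (-(2 * (Real.pi : ℂ) * Complex.I) / (k : ℂ)) := by
    rw [hcdef, map_mul, Complex.conj_ofReal, hζdef, ← Complex.exp_conj]
    congr 2
    simp only [map_div₀, map_mul, Complex.conj_I, Complex.conj_ofReal, Complex.conj_natCast,
      map_ofNat]
    ring
  rw [← hconj]
  have hlam : ∀ z : ℂ, (1 - c * (1 - z) - 1 + c) / c = z := by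
    intro z
    field_simp
    ring
  constructor
  · intro h
    constructor
    · rw [hkey]
      rw [hlam lamp]
      exact h
    · have h2 := conj_mem_specL' wp lamp h
      have h3 : 1 - c * (1 - (starRingEnd ℂ) lamp) ∈ specL w := by
        rw [hkey, hlam]
        exact h2
      have h4 := conj_mem_specL' w _ h3
      have h5 : (starRingEnd ℂ) (1 - c * (1 - (starRingEnd ℂ) lamp))
          = 1 - (starRingEnd ℂ) c * (1 - lamp) := by
        simp [map_sub, map_mul, map_one]
      rwa [h5] at h4
  · rintro ⟨h1, -⟩
    rw [hkey, hlam] at h1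
    exact h1
end

section
/- Let Γ be a weighted directed graph on a finite vertex set V that is k-partite (k ≥ 2) and satisfies r(l) = r for all l ∈ V. Then 1 − r·e^{2πim/k} is an eigenvalue of the normalized Laplace operator Δ for every odd m with 1 ≤ m ≤ k − 1. If in addition w_{jt}/d_j^in > 0 whenever w_{jt} ≠ 0, then 1 − e^{2πim/k} is an eigenvalue of Δ for every m with 0 ≤ m ≤ k − 1. -/
open Polynomial Matrix in
lemma mem_roots_charpoly_of_eigen {n : Type*} [Fintype n] [DecidableEq n] [Nonempty n]
    (M : Matrix n n ℂ) (μ : ℂ) (v : n → ℂ) (hv : v ≠ 0) (h : M *ᵥ v = μ • v) :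
    μ ∈ M.charpoly.roots := by
  rw [Polynomial.mem_roots (M.charpoly_monic.ne_zero)]
  have h1 : M.charpoly.eval μ = ((charmatrix M).map (Polynomial.evalRingHom μ)).det := by
    rw [Matrix.charpoly]
    exact (RingHom.map_det (Polynomial.evalRingHom μ) _)
  have h2 : (charmatrix M).map (Polynomial.evalRingHom μ) = μ • (1 : Matrix n n ℂ) - M := by
    ext i j
    by_cases hij : i = j
    · subst hij; simp [charmatrix_apply_eq]
    · simp [charmatrix_apply_ne _ _ _ hij, Matrix.one_apply_ne hij, hij]
  have h3 : (μ • (1 : Matrix n n ℂ) - M).det = 0 := by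
    rw [← Matrix.exists_mulVec_eq_zero_iff]
    refine ⟨v, hv, ?_⟩
    rw [Matrix.sub_mulVec, h, Matrix.smul_mulVec, Matrix.one_mulVec, sub_self]
  show M.charpoly.IsRoot μ
  rw [Polynomial.IsRoot, h1, h2, h3]

open Matrix in
/-- if `Γ` is `k`-partite and `r(l) = r` for all `l ∈ V`, then
`1 - r·e^{2πim/k}` is an eigenvalue of `Δ` for every odd `m` with `1 ≤ m ≤ k - 1`;
if in addition all normalized weights are positive, then `1 - e^{2πim/k}` is an
eigenvalue of `Δ` for every `0 ≤ m ≤ k - 1`. -/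
theorem kpartite_eigenvalues {V : Type*} [Fintype V] [DecidableEq V] [Nonempty V]
    (w : V → V → ℝ) (hloop : ∀ i, w i i = 0) (k : ℕ) (hk : 2 ≤ k)
    (hkp : IsKPartite w Finset.univ k) (hr : ∀ l, rfun w l = rmax w) :
    (∀ m : ℕ, Odd m → 1 ≤ m → m ≤ k - 1 →
      1 - (rmax w : ℂ) *
        Complex.exp (2 * (Real.pi : ℂ) * Complex.I * (m : ℂ) / (k : ℂ)) ∈ specL w) ∧
    ((∀ j t, w j t ≠ 0 → 0 < w j t / din w j) →
      ∀ m : ℕ, m ≤ k - 1 →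
        1 - Complex.exp (2 * (Real.pi : ℂ) * Complex.I * (m : ℂ) / (k : ℂ)) ∈ specL w) := by
  classical
  obtain ⟨hd, f, hsurj, hedge⟩ := hkp
  have hd' : ∀ i, din w i ≠ 0 := fun i => hd i (Finset.mem_univ i)
  haveI : NeZero k := ⟨by omega⟩
  have hkC : (k : ℂ) ≠ 0 := Nat.cast_ne_zero.mpr (by omega)
  set ζ : ℂ := Complex.exp (2 * (Real.pi : ℂ) * Complex.I / k) with hζdef
  have hζm : ∀ m : ℕ, ζ ^ m =
      Complex.exp (2 * (Real.pi : ℂ) * Complex.I * (m : ℂ) / (k : ℂ)) := by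
    intro m
    rw [hζdef, ← Complex.exp_nat_mul]
    congr 1
    field_simp
  have hζk : ζ ^ k = 1 := by
    have h : 2 * (Real.pi : ℂ) * Complex.I * (k : ℂ) / (k : ℂ)
        = 2 * (Real.pi : ℂ) * Complex.I := by field_simp
    rw [hζm k, h, Complex.exp_two_pi_mul_I]
  have hζ0 : ζ ≠ 0 := Complex.exp_ne_zero _
  set c : ZMod k → ℂ := fun q => ζ ^ q.val with hcdef
  have hc0 : ∀ q, c q ≠ 0 := fun q => pow_ne_zero _ hζ0
  have hcadd : ∀ a b : ZMod k, c (a + b) = c a * c b := by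
    intro a b
    simp only [hcdef]
    rw [ZMod.val_add, ← pow_eq_pow_mod _ hζk, pow_add]
  have hczero : c 0 = 1 := by simp [hcdef]
  have hcnat : ∀ n : ℕ, c (n : ZMod k) = ζ ^ n := by
    intro n
    simp only [hcdef]
    rw [ZMod.val_natCast, ← pow_eq_pow_mod _ hζk]
  have hcneg : ∀ a : ZMod k, c (-a) = (c a)⁻¹ := by
    intro a
    have : c (-a) * c a = 1 := by rw [← hcadd, neg_add_cancel, hczero]
    exact eq_inv_of_mul_eq_one_left this
  have hcmul : ∀ (n : ℕ) (a : ZMod k), c ((n : ZMod k) * a) = c a ^ n := by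
    intro n a
    induction n with
    | zero => simp [hczero]
    | succ n ih =>
      push_cast
      rw [add_mul, one_mul, hcadd, ih, pow_succ]
  -- the key reduction: an eigen-sum identity gives membership in specL
  have key : ∀ (v : V → ℂ) (ρ : ℂ), (∀ j, v j ≠ 0) →
      (∀ i, ∑ j, ((w i j / din w i : ℝ) : ℂ) * v j = ρ * v i) →
      (1 - ρ) ∈ specL w := by
    intro v ρ hvne hsum
    have hv : v ≠ 0 := fun h => hvne (Classical.arbitrary V) (congrFun h _)
    apply mem_roots_charpoly_of_eigen (lap w) _ v hv
    funext i
    have : (lap w *ᵥ v) i = ∑ j, (lap w i j) * v j := by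
      simp [Matrix.mulVec, dotProduct]
    rw [this]
    have hlap : ∀ j, lap w i j
        = (if i = j then (1:ℂ) else 0) - ((w i j / din w i : ℝ) : ℂ) := by
      intro j
      simp only [lap, Matrix.of_apply, if_neg (hd' i)]
    calc ∑ j, (lap w i j) * v j
        = ∑ j, ((if i = j then (1:ℂ) else 0) * v j - ((w i j / din w i : ℝ) : ℂ) * v j) := by
          refine Finset.sum_congr rfl fun j _ => ?_
          rw [hlap j, sub_mul]
      _ = (∑ j, (if i = j then (1:ℂ) else 0) * v j)
            - ∑ j, ((w i j / din w i : ℝ) : ℂ) * v j := Finset.sum_sub_distrib _ _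
      _ = v i - ρ * v i := by
          rw [hsum i]
          congr 1
          simp
      _ = ((1 - ρ) • v) i := by
          simp [Pi.smul_apply, smul_eq_mul]
          ring
  constructor
  · -- Part 1
    intro m hm hm1 hmk
    set v : V → ℂ := fun i => c (-(m : ZMod k) * f i) with hvdef
    have hvne : ∀ j, v j ≠ 0 := fun j => hc0 _
    rw [← hζm m]
    have hcm : c ((m : ℕ) : ZMod k) = ζ ^ m := hcnat m
    have hsum : ∀ i, ∑ j, ((w i j / din w i : ℝ) : ℂ) * v j
        = ((rmax w : ℂ) * ζ ^ m) * v i := by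
      intro i
      have hterm : ∀ j, ((w i j / din w i : ℝ) : ℂ) * v j
          = ((|w i j| / |din w i| : ℝ) : ℂ) * (ζ ^ m * v i) := by
        intro j
        by_cases hw : w i j = 0
        · simp [hw]
        · have hratio : w i j / din w i ≠ 0 := div_ne_zero hw (hd' i)
          obtain ⟨hpos, hneg⟩ := hedge i (Finset.mem_univ i) j (Finset.mem_univ j) hw
          rcases hratio.lt_or_gt with hlt | hgt
          · -- negative case
            obtain ⟨hke, hfj⟩ := hneg hlt
            have hl : ((k / 2 - 1 : ℕ) : ZMod k) = ((k / 2 : ℕ) : ZMod k) - 1 := by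
              have h1 : 1 ≤ k / 2 := by omega
              rw [Nat.cast_sub h1, Nat.cast_one]
            have hhalf : ζ ^ (k / 2) = -1 := by
              rw [hζm (k / 2)]
              have h2 : (2 : ℂ) * ((k / 2 : ℕ) : ℂ) = (k : ℂ) := by
                have : 2 * (k / 2) = k := by
                  obtain ⟨t, ht⟩ := hke; omega
                exact_mod_cast congrArg (Nat.cast : ℕ → ℂ) this
              have : 2 * (Real.pi : ℂ) * Complex.I * ((k / 2 : ℕ) : ℂ) / (k : ℂ)
                  = (Real.pi : ℂ) * Complex.I := by
                rw [div_eq_iff hkC]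
                linear_combination (Real.pi : ℂ) * Complex.I * h2
              rw [this, Complex.exp_pi_mul_I]
            have hneg1 : c (-(m : ZMod k) * ((k / 2 : ℕ) : ZMod k)) = -1 := by
              have heq : (-(m : ZMod k)) * ((k / 2 : ℕ) : ZMod k)
                  = ((m : ℕ) : ZMod k) * (-(((k / 2 : ℕ) : ZMod k))) := by ring
              rw [heq, hcmul, hcneg, hcnat, hhalf]
              rw [inv_neg, inv_one, hm.neg_one_pow]
            have hfeq : -(m : ZMod k) * f j = (-(m : ZMod k) * f i + ((m : ℕ) : ZMod k))
                + (-(m : ZMod k) * ((k / 2 : ℕ) : ZMod k)) := by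
              rw [hfj, hl]; push_cast; ring
            have hvj : v j = -(ζ ^ m * v i) := by
              simp only [hvdef]
              rw [hfeq, hcadd, hcadd, hcm, hneg1]
              ring
            have hre : (w i j / din w i : ℝ) = -(|w i j| / |din w i|) := by
              rw [← abs_div]
              rw [abs_of_neg hlt]
              ring
            rw [hvj, hre]
            push_cast
            ring
          · -- positive case
            have hfi := hpos hgt
            have hfeq : -(m : ZMod k) * f j = -(m : ZMod k) * f i + ((m : ℕ) : ZMod k) := by
              have : f j = f i - 1 := by rw [hfi]; ring
              rw [this]; ring
            have hvj : v j = ζ ^ m * v i := by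
              simp only [hvdef]
              rw [hfeq, hcadd, hcm]
              ring
            have hre : (w i j / din w i : ℝ) = |w i j| / |din w i| := by
              rw [← abs_div, abs_of_pos hgt]
            rw [hvj, hre]
      calc ∑ j, ((w i j / din w i : ℝ) : ℂ) * v j
          = ∑ j, ((|w i j| / |din w i| : ℝ) : ℂ) * (ζ ^ m * v i) :=
            Finset.sum_congr rfl fun j _ => hterm j
        _ = (((∑ j, |w i j|) / |din w i| : ℝ) : ℂ) * (ζ ^ m * v i) := by
            rw [← Finset.sum_mul]
            congr 1
            push_cast [Finset.sum_div]
            ring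
        _ = ((rmax w : ℂ) * ζ ^ m) * v i := by
            rw [← hr i, rfun, if_neg (hd' i)]
            ring
    exact key v _ hvne hsum
  · -- Part 2
    intro hposall m hmk
    set v : V → ℂ := fun i => c (-(m : ZMod k) * f i) with hvdef
    have hvne : ∀ j, v j ≠ 0 := fun j => hc0 _
    rw [← hζm m]
    have hcm : c ((m : ℕ) : ZMod k) = ζ ^ m := hcnat m
    have hsum : ∀ i, ∑ j, ((w i j / din w i : ℝ) : ℂ) * v j = ζ ^ m * v i := by
      intro i
      have hterm : ∀ j, ((w i j / din w i : ℝ) : ℂ) * v j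
          = ((w i j / din w i : ℝ) : ℂ) * (ζ ^ m * v i) := by
        intro j
        by_cases hw : w i j = 0
        · simp [hw]
        · obtain ⟨hpos, _⟩ := hedge i (Finset.mem_univ i) j (Finset.mem_univ j) hw
          have hfi := hpos (hposall i j hw)
          have hfeq : -(m : ZMod k) * f j = -(m : ZMod k) * f i + ((m : ℕ) : ZMod k) := by
            have : f j = f i - 1 := by rw [hfi]; ring
            rw [this]; ring
          have hvj : v j = ζ ^ m * v i := by
            simp only [hvdef]
            rw [hfeq, hcadd, hcm]
            ring
          rw [hvj]
      calc ∑ j, ((w i j / din w i : ℝ) : ℂ) * v j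
          = ∑ j, ((w i j / din w i : ℝ) : ℂ) * (ζ ^ m * v i) :=
            Finset.sum_congr rfl fun j _ => hterm j
        _ = (∑ j, ((w i j / din w i : ℝ) : ℂ)) * (ζ ^ m * v i) := by
            rw [← Finset.sum_mul]
        _ = ζ ^ m * v i := by
            have hsd : (∑ j, ((w i j / din w i : ℝ) : ℂ)) = 1 := by
              have : (∑ j, w i j / din w i) = 1 := by
                rw [← Finset.sum_div, ← din, div_self (hd' i)]
              push_cast [← this]
              norm_cast
            rw [hsd, one_mul]
    have := key v (ζ ^ m) hvne hsum
    exact this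
end

section
/- Let Γ be a weighted directed graph on a finite vertex set V (loops allowed) with d_i^in ≠ 0 for all i ∈ V, and let l ≥ 2 be an integer. Define the neighborhood graph Γ[l] on V by the weights w_{ij}[l] = Σ_{k_1,…,k_{l−1}∈V} (1/d^in_{k_1})⋯(1/d^in_{k_{l−1}}) · w_{i k_1} w_{k_1 k_2} ⋯ w_{k_{l−1} j}. Then: (i) the in-degrees coincide, d_i^in[l] := Σ_j w_{ij}[l] = d_i^in for every i ∈ V; and (ii) the normalized Laplace operators satisfy Δ(Γ[l]) = I − (I − Δ(Γ))^l, i.e., Δ(Γ[l]) = I − P^l where P = I − Δ(Γ). -/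
/-- The weights of the neighborhood graph `Γ[l]`:
`w_{ij}[l] = ∑_{k_1,…,k_{l-1}} (1/d_{k_1})⋯(1/d_{k_{l-1}}) w_{i k_1} w_{k_1 k_2} ⋯ w_{k_{l-1} j}`,
written compactly as `d_i^in · (M^l)_{ij}` where `M_{pq} = w_{pq}/d_p^in` is the matrix of
normalized weights. -/
noncomputable def nbrw {V : Type*} [Fintype V] [DecidableEq V] (w : V → V → ℝ) (l : ℕ) :
    V → V → ℝ :=
  fun i j => din w i * (((Matrix.of fun p q => w p q / din w p) : Matrix V V ℝ) ^ l) i j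

lemma rowsum_pow {V : Type*} [Fintype V] [DecidableEq V] (w : V → V → ℝ)
    (hd : ∀ i, din w i ≠ 0) (l : ℕ) (i : V) :
    ∑ j, (((Matrix.of fun p q => w p q / din w p) : Matrix V V ℝ) ^ l) i j = 1 := by
  induction l generalizing i with
  | zero =>
    simp [Matrix.one_apply]
  | succ n ih =>
    rw [pow_succ]
    simp only [Matrix.mul_apply]
    rw [Finset.sum_comm]
    have : ∀ k : V, ∑ j, (((Matrix.of fun p q => w p q / din w p) : Matrix V V ℝ) ^ n) i k *
        (Matrix.of fun p q => w p q / din w p) k j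
        = (((Matrix.of fun p q => w p q / din w p) : Matrix V V ℝ) ^ n) i k := by
      intro k
      rw [← Finset.mul_sum]
      have : ∑ j, ((Matrix.of fun p q => w p q / din w p) : Matrix V V ℝ) k j = 1 := by
        simp only [Matrix.of_apply]
        rw [← Finset.sum_div]
        exact div_self (hd k)
      rw [this, mul_one]
    simp_rw [this]
    exact ih i

/-- for a graph with all in-degrees nonzero (loops allowed) and `l ≥ 2`, the
neighborhood graph `Γ[l]` satisfies: (i) `d_i^in[l] = d_i^in` for all `i`; and
(ii) `Δ(Γ[l]) = I - (I - Δ(Γ))^l`. -/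
theorem neighborhood_graph_laplacian {V : Type*} [Fintype V] [DecidableEq V] [Nonempty V]
    (w : V → V → ℝ) (hd : ∀ i, din w i ≠ 0) (l : ℕ) (hl : 2 ≤ l) :
    (∀ i, din (nbrw w l) i = din w i) ∧
    lap (nbrw w l) = 1 - ((1 : Matrix V V ℂ) - lap w) ^ l := by
  set M : Matrix V V ℝ := Matrix.of fun p q => w p q / din w p with hM
  have hdin : ∀ i, din (nbrw w l) i = din w i := by
    intro i
    have h : din (nbrw w l) i = din w i * ∑ j, (M ^ l) i j := by
      simp [din, nbrw, Finset.mul_sum, hM]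
    rw [h, rowsum_pow w hd l i, mul_one]
  refine ⟨hdin, ?_⟩
  have h1 : (1 : Matrix V V ℂ) - lap w = M.map Complex.ofReal := by
    ext i j
    simp only [Matrix.sub_apply, Matrix.map_apply, lap, Matrix.of_apply, hd i, if_false,
      Matrix.one_apply, hM]
    by_cases h : i = j <;> simp [h]
  have h2 : (M.map Complex.ofReal) ^ l = (M ^ l).map Complex.ofReal := by
    have := map_pow (Complex.ofRealHom.mapMatrix) M l
    exact this.symm
  rw [h1, h2]
  ext i j
  have hdl : din (nbrw w l) i ≠ 0 := by rw [hdin i]; exact hd i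
  simp only [Matrix.sub_apply, Matrix.map_apply, lap, Matrix.of_apply,
    Matrix.one_apply, nbrw, hdin i, if_neg (hd i)]
  rw [mul_div_cancel_left₀ _ (hd i)]
end
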